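/- arXiv:1407.0189 — 9 statements merged into one kernel-verified Lean document; each statement's English description precedes it below -/
import Mathlib

section
/- Let n ≥ 1, let A be an IFM of order n, let λ ∈ [0,1] and let p > 0 be a real number. Then for every m ≥ 1 and all i, j, the membership entry of the m-th power of A under the maxgeneralized mean–mingeneralized mean operation satisfies (A^m)μ i j = max over all m-paths P from i to j of wμ(P). -/
open Filter Topology

/-- `A` (given by membership part `Amu` and non-membership part `Anu`) is an
intuitionistic fuzzy matrix. -/
def IsIFM (n : ℕ) (Amu Anu : Fin n → Fin n → ℝ) : Prop :=
  ∀ i j, 0 ≤ Amu i j ∧ 0 ≤ Anu i j ∧ Amu i j + Anu i j ≤ 1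

/-- Powers of an IFM under the maxgeneralized mean–mingeneralized mean operation
with parameters `lam` and exponent `p`:
`A^1 = A` and `A^(k+1) = A^k ∘ A`, where
`(X ∘ A)μ i j = max_t (lam·(Xμ i t)^p + (1-lam)·(Aμ t j)^p)^(1/p)` and
`(X ∘ A)ν i j = min_t (lam·(Xν i t)^p + (1-lam)·(Aν t j)^p)^(1/p)`.
(The value at `0` is irrelevant; it is set to `A`.) -/
noncomputable def gmPow (n : ℕ) (lam p : ℝ) (Amu Anu : Fin n → Fin n → ℝ) :
    ℕ → (Fin n → Fin n → ℝ) × (Fin n → Fin n → ℝ)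
  | 0 => (Amu, Anu)
  | 1 => (Amu, Anu)
  | m + 2 =>
    let X := gmPow n lam p Amu Anu (m + 1)
    (fun i j => ⨆ t : Fin n, (lam * X.1 i t ^ p + (1 - lam) * Amu t j ^ p) ^ (1 / p),
     fun i j => ⨅ t : Fin n, (lam * X.2 i t ^ p + (1 - lam) * Anu t j ^ p) ^ (1 / p))

/-- The coefficient of the `k`-th edge in the weight of an `m`-path:
`lam^(m-1)` for the first edge and `lam^(m-1-k)·(1-lam)` afterwards. -/
noncomputable def gmCoef (lam : ℝ) (m k : ℕ) : ℝ :=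
  if k = 0 then lam ^ (m - 1) else lam ^ (m - 1 - k) * (1 - lam)

/-- Weight of an `m`-path `P` with respect to the entry matrix `B`
(`B = Aμ` gives `wμ(P)`, `B = Aν` gives `wν(P)`). -/
noncomputable def gmWeight (n m : ℕ) (lam p : ℝ) (B : Fin n → Fin n → ℝ)
    (P : Fin (m + 1) → Fin n) : ℝ :=
  (∑ k : Fin m, gmCoef lam m (k : ℕ) * B (P k.castSucc) (P k.succ) ^ p) ^ (1 / p)

lemma gmCoef_nonneg {lam : ℝ} (h0 : 0 ≤ lam) (h1 : lam ≤ 1) (m k : ℕ) :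
    0 ≤ gmCoef lam m k := by
  unfold gmCoef
  split
  · exact pow_nonneg h0 _
  · exact mul_nonneg (pow_nonneg h0 _) (by linarith)

lemma gmSum_nonneg {n m : ℕ} {lam p : ℝ} (h0 : 0 ≤ lam) (h1 : lam ≤ 1)
    {B : Fin n → Fin n → ℝ} (hB : ∀ i j, 0 ≤ B i j) (P : Fin (m+1) → Fin n) :
    0 ≤ ∑ k : Fin m, gmCoef lam m (k : ℕ) * B (P k.castSucc) (P k.succ) ^ p :=
  Finset.sum_nonneg fun k _ =>
    mul_nonneg (gmCoef_nonneg h0 h1 m k) (Real.rpow_nonneg (hB _ _) p)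

lemma gmWeight_nonneg {n m : ℕ} {lam p : ℝ} (h0 : 0 ≤ lam) (h1 : lam ≤ 1)
    {B : Fin n → Fin n → ℝ} (hB : ∀ i j, 0 ≤ B i j) (P : Fin (m+1) → Fin n) :
    0 ≤ gmWeight n m lam p B P :=
  Real.rpow_nonneg (gmSum_nonneg h0 h1 hB P) _

lemma gmCoef_succ {lam : ℝ} {m k : ℕ} (hm : 1 ≤ m) (hk : k < m) :
    gmCoef lam (m+1) k = lam * gmCoef lam m k := by
  unfold gmCoef
  split
  · rw [show m + 1 - 1 = (m-1) + 1 by omega, pow_succ']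
  · rw [show m + 1 - 1 - k = (m - 1 - k) + 1 by omega, pow_succ']
    ring

lemma gmWeight_snoc {n m : ℕ} (hm : 1 ≤ m) {lam p : ℝ} (h0 : 0 ≤ lam) (h1 : lam ≤ 1)
    (hp : 0 < p) {B : Fin n → Fin n → ℝ} (hB : ∀ i j, 0 ≤ B i j)
    (P : Fin (m+1) → Fin n) (j : Fin n) :
    gmWeight n (m+1) lam p B (Fin.snoc P j) =
      (lam * gmWeight n m lam p B P ^ p + (1 - lam) * B (P (Fin.last m)) j ^ p) ^ (1/p) := by
  have hS := gmSum_nonneg (p := p) h0 h1 hB P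
  have hw : gmWeight n m lam p B P ^ p
      = ∑ k : Fin m, gmCoef lam m (k : ℕ) * B (P k.castSucc) (P k.succ) ^ p := by
    rw [gmWeight, ← Real.rpow_mul hS, one_div_mul_cancel hp.ne', Real.rpow_one]
  rw [gmWeight, hw, Finset.mul_sum, Fin.sum_univ_castSucc]
  congr 1
  congr 1
  · apply Finset.sum_congr rfl
    intro k _
    rw [Fin.succ_castSucc, Fin.snoc_castSucc, Fin.snoc_castSucc, Fin.coe_castSucc, gmCoef_succ hm k.isLt]
    ring
  · rw [Fin.val_last, Fin.succ_last, Fin.snoc_last, Fin.snoc_castSucc]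
    have : gmCoef lam (m+1) m = 1 - lam := by
      unfold gmCoef
      rw [if_neg (by omega), show m + 1 - 1 - m = 0 by omega, pow_zero, one_mul]
    rw [this]

lemma path_nonempty (n M : ℕ) (a b : Fin n) (hM : 1 ≤ M) :
    Nonempty {P : Fin (M+1) → Fin n // P 0 = a ∧ P (Fin.last M) = b} := by
  refine ⟨⟨fun k => if k = 0 then a else b, by simp, ?_⟩⟩
  have : (Fin.last M : Fin (M+1)) ≠ 0 := by
    simp [Fin.ext_iff]; omega
  simp [this]

lemma ciSup_eq_max {ι : Type*} [Finite ι] [Nonempty ι] (f : ι → ℝ) :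
    ∃ a, (⨆ b, f b) = f a ∧ ∀ b, f b ≤ f a := by
  obtain ⟨a, ha⟩ := Finite.exists_max f
  exact ⟨a, le_antisymm (ciSup_le ha) (le_ciSup (Set.finite_range f).bddAbove a), ha⟩

/-- Theorem 3.1 (membership part): the `(i,j)` entry of the `m`-th
maxgeneralized mean–mingeneralized mean power of `A` is the maximum of the
membership weights of all `m`-paths from `i` to `j`. -/
theorem gmPow_mu_eq_sup_weight (n : ℕ) (hn : 1 ≤ n) (Amu Anu : Fin n → Fin n → ℝ)
    (hA : IsIFM n Amu Anu) (lam p : ℝ) (hlam : lam ∈ Set.Icc (0 : ℝ) 1) (hp : 0 < p)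
    (m : ℕ) (hm : 1 ≤ m) (i j : Fin n) :
    (gmPow n lam p Amu Anu m).1 i j =
      ⨆ P : {P : Fin (m + 1) → Fin n // P 0 = i ∧ P (Fin.last m) = j},
        gmWeight n m lam p Amu P.1 := by
  obtain ⟨h0, h1⟩ := hlam
  have hB : ∀ a b, 0 ≤ Amu a b := fun a b => (hA a b).1
  induction m, hm using Nat.le_induction generalizing i j with
  | base =>
      haveI := path_nonempty n 1 i j le_rfl
      have hval : ∀ P : {P : Fin 2 → Fin n // P 0 = i ∧ P (Fin.last 1) = j},
          gmWeight n 1 lam p Amu P.1 = Amu i j := by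
        rintro ⟨P, hP0, hP1⟩
        show (∑ k : Fin 1, gmCoef lam 1 (k : ℕ) * Amu (P k.castSucc) (P k.succ) ^ p) ^ (1/p)
          = Amu i j
        rw [Fin.sum_univ_one]
        have hc : gmCoef lam 1 ((0 : Fin 1) : ℕ) = 1 := by simp [gmCoef]
        have h2 : P (0 : Fin 1).castSucc = i := hP0
        have h3 : P (0 : Fin 1).succ = j := hP1
        rw [hc, one_mul, h2, h3, ← Real.rpow_mul (hB i j),
            mul_one_div_cancel hp.ne', Real.rpow_one]
      have hL : (gmPow n lam p Amu Anu 1).1 i j = Amu i j := rfl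
      rw [hL]
      calc Amu i j
          = ⨆ _ : {P : Fin 2 → Fin n // P 0 = i ∧ P (Fin.last 1) = j}, Amu i j :=
            (ciSup_const).symm
        _ = _ := iSup_congr fun P => (hval P).symm
  | succ m hm ih =>
      obtain ⟨m', rfl⟩ : ∃ m', m = m' + 1 := ⟨m - 1, by omega⟩
      haveI : Nonempty (Fin n) := ⟨⟨0, hn⟩⟩
      have hstep : (gmPow n lam p Amu Anu (m' + 1 + 1)).1 i j
          = ⨆ t : Fin n, (lam * (gmPow n lam p Amu Anu (m' + 1)).1 i t ^ p
              + (1 - lam) * Amu t j ^ p) ^ (1 / p) := rfl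
      rw [hstep]
      haveI := path_nonempty n (m' + 2) i j (by omega)
      apply le_antisymm
      · apply ciSup_le
        intro t
        haveI := path_nonempty n (m' + 1) i t (by omega)
        obtain ⟨P0, hP0eq, -⟩ := ciSup_eq_max
          (fun P : {P : Fin (m' + 1 + 1) → Fin n // P 0 = i ∧ P (Fin.last (m' + 1)) = t} =>
            gmWeight n (m' + 1) lam p Amu P.1)
        rw [ih i t, hP0eq]
        have htw : Amu t j = Amu (P0.1 (Fin.last (m' + 1))) j := by rw [P0.2.2]
        rw [htw, ← gmWeight_snoc (by omega) h0 h1 hp hB P0.1 j]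
        have hQmem : (Fin.snoc P0.1 j : Fin (m' + 1 + 1 + 1) → Fin n) 0 = i ∧
            (Fin.snoc P0.1 j : Fin (m' + 1 + 1 + 1) → Fin n) (Fin.last (m' + 1 + 1)) = j := by
          constructor
          · rw [show (0 : Fin (m' + 1 + 1 + 1)) = Fin.castSucc 0 from rfl,
                Fin.snoc_castSucc, P0.2.1]
          · exact Fin.snoc_last _ _
        exact le_ciSup (f := fun P : {P : Fin (m' + 1 + 1 + 1) → Fin n //
            P 0 = i ∧ P (Fin.last (m' + 1 + 1)) = j} => gmWeight n (m' + 1 + 1) lam p Amu P.1)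
          (Set.finite_range _).bddAbove ⟨Fin.snoc P0.1 j, hQmem⟩
      · apply ciSup_le
        rintro ⟨Q, hQ0, hQl⟩
        set P : Fin (m' + 1 + 1) → Fin n := Fin.init Q with hPdef
        set t : Fin n := P (Fin.last (m' + 1)) with ht
        have hQsnoc : Q = Fin.snoc P j := by
          rw [hPdef, ← hQl]; exact (Fin.snoc_init_self Q).symm
        have hw : gmWeight n (m' + 1 + 1) lam p Amu Q
            = (lam * gmWeight n (m' + 1) lam p Amu P ^ p + (1 - lam) * Amu t j ^ p) ^ (1 / p) := by
          rw [hQsnoc]; exact gmWeight_snoc (by omega) h0 h1 hp hB P j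
        have hPmem : P 0 = i ∧ P (Fin.last (m' + 1)) = t :=
          ⟨by simp only [hPdef, Fin.init, Fin.castSucc_zero]; exact hQ0, rfl⟩
        haveI := path_nonempty n (m' + 1) i t (by omega)
        have hle : gmWeight n (m' + 1) lam p Amu P ≤ (gmPow n lam p Amu Anu (m' + 1)).1 i t := by
          rw [ih i t]
          exact le_ciSup (f := fun P : {P : Fin (m' + 1 + 1) → Fin n //
              P 0 = i ∧ P (Fin.last (m' + 1)) = t} => gmWeight n (m' + 1) lam p Amu P.1)
            (Set.finite_range _).bddAbove ⟨P, hPmem⟩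
        calc gmWeight n (m' + 1 + 1) lam p Amu Q
            = (lam * gmWeight n (m' + 1) lam p Amu P ^ p
                + (1 - lam) * Amu t j ^ p) ^ (1 / p) := hw
          _ ≤ (lam * (gmPow n lam p Amu Anu (m' + 1)).1 i t ^ p
                + (1 - lam) * Amu t j ^ p) ^ (1 / p) := by
              apply Real.rpow_le_rpow
              · have := gmWeight_nonneg (m := m' + 1) (p := p) h0 h1 hB P
                have := Real.rpow_nonneg (hB t j) p
                have := Real.rpow_nonneg (gmWeight_nonneg (m := m' + 1) (p := p) h0 h1 hB P) p
                nlinarith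
              · have hmono := Real.rpow_le_rpow
                  (gmWeight_nonneg (m := m' + 1) (p := p) h0 h1 hB P) hle hp.le
                nlinarith
              · positivity
          _ ≤ _ := le_ciSup (f := fun t : Fin n =>
              (lam * (gmPow n lam p Amu Anu (m' + 1)).1 i t ^ p
                + (1 - lam) * Amu t j ^ p) ^ (1 / p)) (Set.finite_range _).bddAbove t
end

section
/- Let n ≥ 1, let A be an IFM of order n, let λ ∈ [0,1] and let p ≥ 1 be a real number. Then for every m ≥ 2 and all r, s, the consecutive maxgeneralized mean–mingeneralized mean powers of A satisfy |(A^m)μ r s − (A^(m−1))μ r s| ≤ λ^((m−2)/p) and |(A^m)ν r s − (A^(m−1))ν r s| ≤ λ^((m−2)/p). -/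
open Filter Topology

lemma key_mink {p lam a x y : ℝ} (hp : 1 ≤ p) (hlam : 0 ≤ lam) (ha : 0 ≤ a)
    (hy : 0 ≤ y) (hxy : y ≤ x) :
    (lam * x ^ p + a) ^ (1 / p) ≤ lam ^ (1 / p) * (x - y) + (lam * y ^ p + a) ^ (1 / p) := by
  have hp0 : p ≠ 0 := by positivity
  have hx : 0 ≤ x := hy.trans hxy
  have hxy' : 0 ≤ x - y := sub_nonneg.2 hxy
  have hl : 0 ≤ lam ^ (1 / p) := Real.rpow_nonneg hlam _
  have hinv : 1 / p * p = 1 := by field_simp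
  have H := Real.Lp_add_le (Finset.univ : Finset (Fin 2))
    ![lam ^ (1/p) * y, a ^ (1/p)] ![lam ^ (1/p) * (x - y), 0] hp
  simp only [Fin.sum_univ_two, Matrix.cons_val_zero, Matrix.cons_val_one, Matrix.head_cons,
    add_zero] at H
  have e1 : |lam ^ (1/p) * y + lam ^ (1/p) * (x - y)| = lam ^ (1/p) * x := by
    rw [← mul_add, add_sub_cancel, abs_of_nonneg (by positivity)]
  have epow : ∀ b : ℝ, 0 ≤ b → |lam ^ (1/p) * b| ^ p = lam * b ^ p := by
    intro b hb
    rw [abs_of_nonneg (by positivity), Real.mul_rpow hl hb, ← Real.rpow_mul hlam,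
      hinv, Real.rpow_one]
  have ea : |a ^ (1/p)| ^ p = a := by
    rw [abs_of_nonneg (Real.rpow_nonneg ha _), ← Real.rpow_mul ha, hinv, Real.rpow_one]
  have ex : (lam ^ (1/p) * x) ^ p = lam * x ^ p := by
    rw [← abs_of_nonneg (show (0:ℝ) ≤ lam ^ (1/p) * x by positivity), epow x hx]
  rw [e1, ea, ex, epow y hy, abs_zero, Real.zero_rpow hp0, add_zero, epow (x - y) hxy',
    Real.mul_rpow hlam (Real.rpow_nonneg hxy' p), ← Real.rpow_mul hxy', mul_one_div,
    div_self hp0, Real.rpow_one] at H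
  linarith

lemma key_lip {p lam a x y : ℝ} (hp : 1 ≤ p) (hlam : 0 ≤ lam) (ha : 0 ≤ a)
    (hx : 0 ≤ x) (hy : 0 ≤ y) :
    |(lam * x ^ p + a) ^ (1 / p) - (lam * y ^ p + a) ^ (1 / p)| ≤ lam ^ (1 / p) * |x - y| := by
  have hp' : (0:ℝ) ≤ p := le_trans zero_le_one hp
  have mono : ∀ u v : ℝ, 0 ≤ u → u ≤ v →
      (lam * u ^ p + a) ^ (1/p) ≤ (lam * v ^ p + a) ^ (1/p) := by
    intro u v hu huv
    exact Real.rpow_le_rpow (by positivity)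
      (by nlinarith [Real.rpow_le_rpow hu huv hp', Real.rpow_nonneg hu p]) (by positivity)
  rcases le_total y x with h | h
  · rw [abs_of_nonneg (sub_nonneg.2 (mono y x hy h)), abs_of_nonneg (sub_nonneg.2 h)]
    have := key_mink hp hlam ha hy h
    linarith
  · rw [abs_of_nonpos (sub_nonpos.2 (mono x y hx h)), abs_of_nonpos (sub_nonpos.2 h)]
    have := key_mink hp hlam ha hx h
    linarith

lemma gmPow_mem (n : ℕ) (hn : 1 ≤ n) (Amu Anu : Fin n → Fin n → ℝ)
    (hA : IsIFM n Amu Anu) (lam p : ℝ) (hlam : lam ∈ Set.Icc (0:ℝ) 1) (hp : 1 ≤ p)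
    (m : ℕ) : ∀ i j, (gmPow n lam p Amu Anu m).1 i j ∈ Set.Icc (0:ℝ) 1 ∧
      (gmPow n lam p Amu Anu m).2 i j ∈ Set.Icc (0:ℝ) 1 := by
  have hne : Nonempty (Fin n) := Fin.pos_iff_nonempty.mp hn
  have hp0 : p ≠ 0 := by positivity
  have hA' : ∀ i j, Amu i j ∈ Set.Icc (0:ℝ) 1 ∧ Anu i j ∈ Set.Icc (0:ℝ) 1 := by
    intro i j
    obtain ⟨h1, h2, h3⟩ := hA i j
    exact ⟨⟨h1, by linarith⟩, ⟨h2, by linarith⟩⟩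
  induction m with
  | zero => intro i j; exact hA' i j
  | succ k ih =>
    match k, ih with
    | 0, _ => intro i j; exact hA' i j
    | k + 1, ih =>
      intro i j
      have term_mem : ∀ (X B : Fin n → Fin n → ℝ)
          (hX : ∀ i j, X i j ∈ Set.Icc (0:ℝ) 1) (hB : ∀ i j, B i j ∈ Set.Icc (0:ℝ) 1) (t : Fin n),
          (lam * X i t ^ p + (1 - lam) * B t j ^ p) ^ (1/p) ∈ Set.Icc (0:ℝ) 1 := by
        intro X B hX hB t
        obtain ⟨hx0, hx1⟩ := hX i t
        obtain ⟨hb0, hb1⟩ := hB t j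
        have h1 : X i t ^ p ≤ 1 := Real.rpow_le_one hx0 hx1 (by positivity)
        have h2 : B t j ^ p ≤ 1 := Real.rpow_le_one hb0 hb1 (by positivity)
        have h3 : 0 ≤ X i t ^ p := Real.rpow_nonneg hx0 _
        have h4 : 0 ≤ B t j ^ p := Real.rpow_nonneg hb0 _
        have h5 : 0 ≤ lam * X i t ^ p + (1 - lam) * B t j ^ p :=
          add_nonneg (mul_nonneg hlam.1 h3) (mul_nonneg (by linarith [hlam.2]) h4)
        constructor
        · exact Real.rpow_nonneg h5 _
        · apply Real.rpow_le_one h5 _ (by positivity)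
          nlinarith [hlam.1, hlam.2]
      constructor
      · simp only [gmPow]
        constructor
        · exact Real.iSup_nonneg fun t => (term_mem _ _ (fun i j => (ih i j).1) (fun i j => (hA' i j).1) t).1
        · exact ciSup_le fun t => (term_mem _ _ (fun i j => (ih i j).1) (fun i j => (hA' i j).1) t).2
      · simp only [gmPow]
        constructor
        · exact le_ciInf fun t => (term_mem _ _ (fun i j => (ih i j).2) (fun i j => (hA' i j).2) t).1
        · exact le_trans (ciInf_le (Set.Finite.bddBelow (Set.finite_range _)) (Classical.arbitrary _))
            (term_mem _ _ (fun i j => (ih i j).2) (fun i j => (hA' i j).2) _).2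

lemma sup_diff_le {n : ℕ} (hn : 1 ≤ n) (f g : Fin n → ℝ) {ε : ℝ}
    (h : ∀ t, |f t - g t| ≤ ε) : |(⨆ t, f t) - ⨆ t, g t| ≤ ε := by
  have hne : Nonempty (Fin n) := Fin.pos_iff_nonempty.mp hn
  have one : ∀ u v : Fin n → ℝ, (∀ t, u t ≤ v t + ε) → (⨆ t, u t) ≤ (⨆ t, v t) + ε := by
    intro u v huv
    exact ciSup_le fun t => (huv t).trans
      (add_le_add_left (le_ciSup (Set.Finite.bddAbove (Set.finite_range v)) t) ε)
  rw [abs_sub_le_iff]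
  constructor
  · have := one f g fun t => by have := (abs_sub_le_iff.mp (h t)).1; linarith
    linarith
  · have := one g f fun t => by have := (abs_sub_le_iff.mp (h t)).2; linarith
    linarith

lemma inf_diff_le {n : ℕ} (hn : 1 ≤ n) (f g : Fin n → ℝ) {ε : ℝ}
    (h : ∀ t, |f t - g t| ≤ ε) : |(⨅ t, f t) - ⨅ t, g t| ≤ ε := by
  have hne : Nonempty (Fin n) := Fin.pos_iff_nonempty.mp hn
  have one : ∀ u v : Fin n → ℝ, (∀ t, u t ≤ v t + ε) → (⨅ t, u t) ≤ (⨅ t, v t) + ε := by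
    intro u v huv
    obtain ⟨t0, ht0⟩ := Finite.exists_min v
    have : (⨅ t, v t) = v t0 :=
      le_antisymm (ciInf_le (Set.Finite.bddBelow (Set.finite_range v)) t0) (le_ciInf ht0)
    rw [this]
    exact le_trans (ciInf_le (Set.Finite.bddBelow (Set.finite_range u)) t0) (huv t0)
  rw [abs_sub_le_iff]
  constructor
  · have := one f g fun t => by have := (abs_sub_le_iff.mp (h t)).1; linarith
    linarith
  · have := one g f fun t => by have := (abs_sub_le_iff.mp (h t)).2; linarith
    linarith

/-- Consecutive maxgeneralized mean–mingeneralized mean powers differ by at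
most `lam^((m-2)/p)` entrywise. -/
theorem gmPow_consecutive_close (n : ℕ) (hn : 1 ≤ n) (Amu Anu : Fin n → Fin n → ℝ)
    (hA : IsIFM n Amu Anu) (lam p : ℝ) (hlam : lam ∈ Set.Icc (0 : ℝ) 1) (hp : 1 ≤ p)
    (m : ℕ) (hm : 2 ≤ m) (r s : Fin n) :
    |(gmPow n lam p Amu Anu m).1 r s - (gmPow n lam p Amu Anu (m - 1)).1 r s| ≤
        lam ^ (((m : ℝ) - 2) / p) ∧
      |(gmPow n lam p Amu Anu m).2 r s - (gmPow n lam p Amu Anu (m - 1)).2 r s| ≤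
        lam ^ (((m : ℝ) - 2) / p) := by
  have hp0 : p ≠ 0 := by positivity
  have mem := gmPow_mem n hn Amu Anu hA lam p hlam hp
  induction m, hm using Nat.le_induction generalizing r s with
  | base =>
    rw [show (2:ℕ) - 1 = 1 from rfl, show ((2:ℕ):ℝ) - 2 = 0 by norm_num, zero_div,
      Real.rpow_zero]
    obtain ⟨⟨a1, a2⟩, a3, a4⟩ := mem 2 r s
    obtain ⟨⟨b1, b2⟩, b3, b4⟩ := mem 1 r s
    constructor <;> rw [abs_sub_le_iff] <;> constructor <;> linarith
  | succ m hm ih =>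
    obtain ⟨k, rfl⟩ := Nat.exists_eq_add_of_le hm
    rw [show 2 + k + 1 = k + 3 by omega, show k + 3 - 1 = k + 2 by omega,
      show ((k + 3 : ℕ) : ℝ) - 2 = (k : ℝ) + 1 by push_cast; ring]
    have ih' := fun r s => ih r s
    simp only [show 2 + k = k + 2 by omega, show k + 2 - 1 = k + 1 by omega,
      show ((k + 2 : ℕ) : ℝ) - 2 = (k : ℝ) by push_cast; ring] at ih'
    have hstep : lam ^ ((1:ℝ)/p) * lam ^ ((k:ℝ)/p) ≤ lam ^ (((k:ℝ) + 1)/p) := by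
      rcases eq_or_lt_of_le hlam.1 with h0 | h0
      · rw [← h0, Real.zero_rpow (by positivity : (1:ℝ)/p ≠ 0), zero_mul]
        exact Real.rpow_nonneg le_rfl _
      · rw [← Real.rpow_add h0, show (1:ℝ)/p + (k:ℝ)/p = ((k:ℝ) + 1)/p by ring]
    have hε : 0 ≤ lam ^ (((k:ℝ) + 1)/p) := Real.rpow_nonneg hlam.1 _
    constructor
    · show |(⨆ t, _) - ⨆ t, _| ≤ _
      apply sup_diff_le hn
      intro t
      have ha : 0 ≤ (1 - lam) * Amu t s ^ p :=
        mul_nonneg (by linarith [hlam.2]) (Real.rpow_nonneg (hA t s).1 _)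
      refine le_trans (key_lip hp hlam.1 ha (mem (k + 2) r t).1.1 (mem (k + 1) r t).1.1) ?_
      refine le_trans ?_ hstep
      exact mul_le_mul_of_nonneg_left ((ih' r t).1) (Real.rpow_nonneg hlam.1 _)
    · show |(⨅ t, _) - ⨅ t, _| ≤ _
      apply inf_diff_le hn
      intro t
      have ha : 0 ≤ (1 - lam) * Anu t s ^ p :=
        mul_nonneg (by linarith [hlam.2]) (Real.rpow_nonneg (hA t s).2.1 _)
      refine le_trans (key_lip hp hlam.1 ha (mem (k + 2) r t).2.1 (mem (k + 1) r t).2.1) ?_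
      refine le_trans ?_ hstep
      exact mul_le_mul_of_nonneg_left ((ih' r t).2) (Real.rpow_nonneg hlam.1 _)
end

section
/- Let n ≥ 1, let A be an IFM of order n, let λ ∈ [0,1) and let p > 0 be a real number. Then the maxgeneralized mean–mingeneralized mean powers of A converge: for all i, j, the real sequences m ↦ (A^m)μ i j and m ↦ (A^m)ν i j each converge to a limit. -/
open Filter Topology

/-- Auxiliary sequence: the `p`-th powers of the entries, `⨆` version. -/
noncomputable def Useq (n : ℕ) (lam p : ℝ) (B : Fin n → Fin n → ℝ) :
    ℕ → Fin n → Fin n → ℝ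
  | 0 => fun i j => B i j ^ p
  | m + 1 => fun i j => ⨆ t : Fin n, (lam * Useq n lam p B m i t + (1 - lam) * B t j ^ p)

/-- Auxiliary sequence: the `p`-th powers of the entries, `⨅` version. -/
noncomputable def Vseq (n : ℕ) (lam p : ℝ) (B : Fin n → Fin n → ℝ) :
    ℕ → Fin n → Fin n → ℝ
  | 0 => fun i j => B i j ^ p
  | m + 1 => fun i j => ⨅ t : Fin n, (lam * Vseq n lam p B m i t + (1 - lam) * B t j ^ p)

section Aux

variable {n : ℕ}

lemma sup_abs_sub_le (hn : 1 ≤ n) {f g : Fin n → ℝ} {c : ℝ}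
    (h : ∀ t, |f t - g t| ≤ c) : |(⨆ t, f t) - (⨆ t, g t)| ≤ c := by
  have : Nonempty (Fin n) := ⟨⟨0, hn⟩⟩
  have hbf : BddAbove (Set.range f) := (Set.finite_range f).bddAbove
  have hbg : BddAbove (Set.range g) := (Set.finite_range g).bddAbove
  rw [abs_sub_le_iff]
  constructor
  · rw [sub_le_iff_le_add]
    refine ciSup_le fun t => ?_
    have h1 := (abs_sub_le_iff.mp (h t)).1
    have h2 := le_ciSup hbg t
    linarith
  · rw [sub_le_iff_le_add]
    refine ciSup_le fun t => ?_
    have h1 := (abs_sub_le_iff.mp (h t)).2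
    have h2 := le_ciSup hbf t
    linarith

lemma inf_abs_sub_le (hn : 1 ≤ n) {f g : Fin n → ℝ} {c : ℝ}
    (h : ∀ t, |f t - g t| ≤ c) : |(⨅ t, f t) - (⨅ t, g t)| ≤ c := by
  have : Nonempty (Fin n) := ⟨⟨0, hn⟩⟩
  have hbf : BddBelow (Set.range f) := (Set.finite_range f).bddBelow
  have hbg : BddBelow (Set.range g) := (Set.finite_range g).bddBelow
  rw [abs_sub_le_iff]
  constructor
  · obtain ⟨t0, ht0⟩ := Finite.exists_min g
    have h1 := (abs_sub_le_iff.mp (h t0)).1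
    have h2 : ⨅ t, f t ≤ f t0 := ciInf_le hbf t0
    have h3 : g t0 ≤ ⨅ t, g t := le_ciInf ht0
    linarith
  · obtain ⟨t0, ht0⟩ := Finite.exists_min f
    have h1 := (abs_sub_le_iff.mp (h t0)).2
    have h2 : ⨅ t, g t ≤ g t0 := ciInf_le hbg t0
    have h3 : f t0 ≤ ⨅ t, f t := le_ciInf ht0
    linarith

lemma sup_mem_bounds (hn : 1 ≤ n) {f : Fin n → ℝ} {a b : ℝ}
    (h : ∀ t, f t ∈ Set.Icc a b) : (⨆ t, f t) ∈ Set.Icc a b := by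
  have : Nonempty (Fin n) := ⟨⟨0, hn⟩⟩
  have hbf : BddAbove (Set.range f) := (Set.finite_range f).bddAbove
  exact ⟨le_trans (h ⟨0, hn⟩).1 (le_ciSup hbf ⟨0, hn⟩), ciSup_le fun t => (h t).2⟩

lemma inf_mem_bounds (hn : 1 ≤ n) {f : Fin n → ℝ} {a b : ℝ}
    (h : ∀ t, f t ∈ Set.Icc a b) : (⨅ t, f t) ∈ Set.Icc a b := by
  have : Nonempty (Fin n) := ⟨⟨0, hn⟩⟩
  have hbf : BddBelow (Set.range f) := (Set.finite_range f).bddBelow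
  exact ⟨le_ciInf fun t => (h t).1, le_trans (ciInf_le hbf ⟨0, hn⟩) (h ⟨0, hn⟩).2⟩

lemma rpow_ciSup (hn : 1 ≤ n) {f : Fin n → ℝ} (hf : ∀ t, 0 ≤ f t) {q : ℝ}
    (hq : 0 ≤ q) : (⨆ t, f t) ^ q = ⨆ t, f t ^ q := by
  have : Nonempty (Fin n) := ⟨⟨0, hn⟩⟩
  obtain ⟨t0, ht0⟩ := Finite.exists_max f
  have hbf : BddAbove (Set.range f) := (Set.finite_range f).bddAbove
  have hbf' : BddAbove (Set.range fun t => f t ^ q) :=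
    (Set.finite_range _).bddAbove
  have h1 : (⨆ t, f t) = f t0 := le_antisymm (ciSup_le ht0) (le_ciSup hbf t0)
  have h2 : (⨆ t, f t ^ q) = f t0 ^ q :=
    le_antisymm (ciSup_le fun t => Real.rpow_le_rpow (hf t) (ht0 t) hq)
      (le_ciSup hbf' t0)
  rw [h1, h2]

lemma rpow_ciInf (hn : 1 ≤ n) {f : Fin n → ℝ} (hf : ∀ t, 0 ≤ f t) {q : ℝ}
    (hq : 0 ≤ q) : (⨅ t, f t) ^ q = ⨅ t, f t ^ q := by
  have : Nonempty (Fin n) := ⟨⟨0, hn⟩⟩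
  obtain ⟨t0, ht0⟩ := Finite.exists_min f
  have hbf : BddBelow (Set.range f) := (Set.finite_range f).bddBelow
  have hbf' : BddBelow (Set.range fun t => f t ^ q) :=
    (Set.finite_range _).bddBelow
  have h1 : (⨅ t, f t) = f t0 := le_antisymm (ciInf_le hbf t0) (le_ciInf ht0)
  have h2 : (⨅ t, f t ^ q) = f t0 ^ q :=
    le_antisymm (ciInf_le hbf' t0)
      (le_ciInf fun t => Real.rpow_le_rpow (hf t0) (ht0 t) hq)
  rw [h1, h2]

/-- Entries of `Useq` stay in `[0,1]`. -/
lemma Useq_mem (hn : 1 ≤ n) {lam p : ℝ} {B : Fin n → Fin n → ℝ}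
    (hB : ∀ i j, B i j ∈ Set.Icc (0 : ℝ) 1) (hlam : lam ∈ Set.Ico (0 : ℝ) 1)
    (hp : 0 < p) : ∀ m i j, Useq n lam p B m i j ∈ Set.Icc (0 : ℝ) 1 := by
  intro m
  induction m with
  | zero =>
    intro i j
    exact ⟨Real.rpow_nonneg (hB i j).1 p,
      Real.rpow_le_one (hB i j).1 (hB i j).2 hp.le⟩
  | succ m ih =>
    intro i j
    refine sup_mem_bounds hn fun t => ?_
    have h1 := ih i t
    have h2 : B t j ^ p ∈ Set.Icc (0 : ℝ) 1 :=
      ⟨Real.rpow_nonneg (hB t j).1 p, Real.rpow_le_one (hB t j).1 (hB t j).2 hp.le⟩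
    constructor
    · nlinarith [h1.1, h2.1, hlam.1, hlam.2]
    · nlinarith [h1.2, h2.2, hlam.1, hlam.2]

lemma Vseq_mem (hn : 1 ≤ n) {lam p : ℝ} {B : Fin n → Fin n → ℝ}
    (hB : ∀ i j, B i j ∈ Set.Icc (0 : ℝ) 1) (hlam : lam ∈ Set.Ico (0 : ℝ) 1)
    (hp : 0 < p) : ∀ m i j, Vseq n lam p B m i j ∈ Set.Icc (0 : ℝ) 1 := by
  intro m
  induction m with
  | zero =>
    intro i j
    exact ⟨Real.rpow_nonneg (hB i j).1 p,
      Real.rpow_le_one (hB i j).1 (hB i j).2 hp.le⟩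
  | succ m ih =>
    intro i j
    refine inf_mem_bounds hn fun t => ?_
    have h1 := ih i t
    have h2 : B t j ^ p ∈ Set.Icc (0 : ℝ) 1 :=
      ⟨Real.rpow_nonneg (hB t j).1 p, Real.rpow_le_one (hB t j).1 (hB t j).2 hp.le⟩
    constructor
    · nlinarith [h1.1, h2.1, hlam.1, hlam.2]
    · nlinarith [h1.2, h2.2, hlam.1, hlam.2]

/-- Geometric contraction of successive differences. -/
lemma Useq_dist (hn : 1 ≤ n) {lam p : ℝ} {B : Fin n → Fin n → ℝ}
    (hB : ∀ i j, B i j ∈ Set.Icc (0 : ℝ) 1) (hlam : lam ∈ Set.Ico (0 : ℝ) 1)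
    (hp : 0 < p) :
    ∀ m i j, |Useq n lam p B (m + 1) i j - Useq n lam p B m i j| ≤ lam ^ m := by
  intro m
  induction m with
  | zero =>
    intro i j
    have h1 := Useq_mem hn hB hlam hp 1 i j
    have h0 := Useq_mem hn hB hlam hp 0 i j
    rw [pow_zero, abs_sub_le_iff]
    obtain ⟨a1, a2⟩ := h1; obtain ⟨b1, b2⟩ := h0
    constructor <;> linarith
  | succ m ih =>
    intro i j
    show |(⨆ t, (lam * Useq n lam p B (m + 1) i t + (1 - lam) * B t j ^ p)) -
      (⨆ t, (lam * Useq n lam p B m i t + (1 - lam) * B t j ^ p))| ≤ lam ^ (m + 1)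
    refine sup_abs_sub_le hn fun t => ?_
    have h1 := ih i t
    have heq : lam * Useq n lam p B (m + 1) i t + (1 - lam) * B t j ^ p -
        (lam * Useq n lam p B m i t + (1 - lam) * B t j ^ p)
        = lam * (Useq n lam p B (m + 1) i t - Useq n lam p B m i t) := by ring
    rw [heq, abs_mul, abs_of_nonneg hlam.1, pow_succ, mul_comm (lam ^ m) lam]
    exact mul_le_mul_of_nonneg_left h1 hlam.1

lemma Vseq_dist (hn : 1 ≤ n) {lam p : ℝ} {B : Fin n → Fin n → ℝ}
    (hB : ∀ i j, B i j ∈ Set.Icc (0 : ℝ) 1) (hlam : lam ∈ Set.Ico (0 : ℝ) 1)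
    (hp : 0 < p) :
    ∀ m i j, |Vseq n lam p B (m + 1) i j - Vseq n lam p B m i j| ≤ lam ^ m := by
  intro m
  induction m with
  | zero =>
    intro i j
    have h1 := Vseq_mem hn hB hlam hp 1 i j
    have h0 := Vseq_mem hn hB hlam hp 0 i j
    rw [pow_zero, abs_sub_le_iff]
    obtain ⟨a1, a2⟩ := h1; obtain ⟨b1, b2⟩ := h0
    constructor <;> linarith
  | succ m ih =>
    intro i j
    show |(⨅ t, (lam * Vseq n lam p B (m + 1) i t + (1 - lam) * B t j ^ p)) -
      (⨅ t, (lam * Vseq n lam p B m i t + (1 - lam) * B t j ^ p))| ≤ lam ^ (m + 1)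
    refine inf_abs_sub_le hn fun t => ?_
    have h1 := ih i t
    have heq : lam * Vseq n lam p B (m + 1) i t + (1 - lam) * B t j ^ p -
        (lam * Vseq n lam p B m i t + (1 - lam) * B t j ^ p)
        = lam * (Vseq n lam p B (m + 1) i t - Vseq n lam p B m i t) := by ring
    rw [heq, abs_mul, abs_of_nonneg hlam.1, pow_succ, mul_comm (lam ^ m) lam]
    exact mul_le_mul_of_nonneg_left h1 hlam.1

/-- The `μ`-part of `gmPow` is the `1/p` power of `Useq`. -/
lemma gmPow_fst_eq (hn : 1 ≤ n) {lam p : ℝ} {Amu Anu : Fin n → Fin n → ℝ}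
    (hB : ∀ i j, Amu i j ∈ Set.Icc (0 : ℝ) 1) (hlam : lam ∈ Set.Ico (0 : ℝ) 1)
    (hp : 0 < p) :
    ∀ m i j, (gmPow n lam p Amu Anu (m + 1)).1 i j = Useq n lam p Amu m i j ^ (1 / p) := by
  intro m
  induction m with
  | zero =>
    intro i j
    show Amu i j = (Amu i j ^ p) ^ (1 / p)
    rw [one_div, Real.rpow_rpow_inv (hB i j).1 hp.ne']
  | succ m ih =>
    intro i j
    show (⨆ t, (lam * (gmPow n lam p Amu Anu (m + 1)).1 i t ^ p + (1 - lam) * Amu t j ^ p) ^ (1 / p))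
      = (⨆ t, (lam * Useq n lam p Amu m i t + (1 - lam) * Amu t j ^ p)) ^ (1 / p)
    have hnn : ∀ t, 0 ≤ lam * Useq n lam p Amu m i t + (1 - lam) * Amu t j ^ p := by
      intro t
      have h1 := (Useq_mem hn hB hlam hp m i t).1
      have h2 : (0:ℝ) ≤ Amu t j ^ p := Real.rpow_nonneg (hB t j).1 p
      nlinarith [hlam.1, hlam.2]
    have hinner : ∀ t : Fin n,
        (lam * (gmPow n lam p Amu Anu (m + 1)).1 i t ^ p + (1 - lam) * Amu t j ^ p) ^ (1 / p)
        = (lam * Useq n lam p Amu m i t + (1 - lam) * Amu t j ^ p) ^ (1 / p) := by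
      intro t
      rw [ih i t, one_div, Real.rpow_inv_rpow (Useq_mem hn hB hlam hp m i t).1 hp.ne']
    calc (⨆ t, (lam * (gmPow n lam p Amu Anu (m + 1)).1 i t ^ p + (1 - lam) * Amu t j ^ p) ^ (1 / p))
        = ⨆ t, (lam * Useq n lam p Amu m i t + (1 - lam) * Amu t j ^ p) ^ (1 / p) :=
          iSup_congr hinner
      _ = (⨆ t, (lam * Useq n lam p Amu m i t + (1 - lam) * Amu t j ^ p)) ^ (1 / p) :=
          (rpow_ciSup hn hnn (by positivity)).symm

/-- The `ν`-part of `gmPow` is the `1/p` power of `Vseq`. -/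
lemma gmPow_snd_eq (hn : 1 ≤ n) {lam p : ℝ} {Amu Anu : Fin n → Fin n → ℝ}
    (hB : ∀ i j, Anu i j ∈ Set.Icc (0 : ℝ) 1) (hlam : lam ∈ Set.Ico (0 : ℝ) 1)
    (hp : 0 < p) :
    ∀ m i j, (gmPow n lam p Amu Anu (m + 1)).2 i j = Vseq n lam p Anu m i j ^ (1 / p) := by
  intro m
  induction m with
  | zero =>
    intro i j
    show Anu i j = (Anu i j ^ p) ^ (1 / p)
    rw [one_div, Real.rpow_rpow_inv (hB i j).1 hp.ne']
  | succ m ih =>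
    intro i j
    show (⨅ t, (lam * (gmPow n lam p Amu Anu (m + 1)).2 i t ^ p + (1 - lam) * Anu t j ^ p) ^ (1 / p))
      = (⨅ t, (lam * Vseq n lam p Anu m i t + (1 - lam) * Anu t j ^ p)) ^ (1 / p)
    have hnn : ∀ t, 0 ≤ lam * Vseq n lam p Anu m i t + (1 - lam) * Anu t j ^ p := by
      intro t
      have h1 := (Vseq_mem hn hB hlam hp m i t).1
      have h2 : (0:ℝ) ≤ Anu t j ^ p := Real.rpow_nonneg (hB t j).1 p
      nlinarith [hlam.1, hlam.2]
    have hinner : ∀ t : Fin n,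
        (lam * (gmPow n lam p Amu Anu (m + 1)).2 i t ^ p + (1 - lam) * Anu t j ^ p) ^ (1 / p)
        = (lam * Vseq n lam p Anu m i t + (1 - lam) * Anu t j ^ p) ^ (1 / p) := by
      intro t
      rw [ih i t, one_div, Real.rpow_inv_rpow (Vseq_mem hn hB hlam hp m i t).1 hp.ne']
    calc (⨅ t, (lam * (gmPow n lam p Amu Anu (m + 1)).2 i t ^ p + (1 - lam) * Anu t j ^ p) ^ (1 / p))
        = ⨅ t, (lam * Vseq n lam p Anu m i t + (1 - lam) * Anu t j ^ p) ^ (1 / p) :=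
          iInf_congr hinner
      _ = (⨅ t, (lam * Vseq n lam p Anu m i t + (1 - lam) * Anu t j ^ p)) ^ (1 / p) :=
          (rpow_ciInf hn hnn (by positivity)).symm

end Aux

/-- Theorem 3.2 (first part): the maxgeneralized mean–mingeneralized mean
powers of an IFM converge entrywise. -/
theorem gmPow_converges (n : ℕ) (hn : 1 ≤ n) (Amu Anu : Fin n → Fin n → ℝ)
    (hA : IsIFM n Amu Anu) (lam p : ℝ) (hlam : lam ∈ Set.Ico (0 : ℝ) 1) (hp : 0 < p)
    (i j : Fin n) :
    (∃ L : ℝ, Tendsto (fun m => (gmPow n lam p Amu Anu m).1 i j) atTop (𝓝 L)) ∧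
      ∃ M : ℝ, Tendsto (fun m => (gmPow n lam p Amu Anu m).2 i j) atTop (𝓝 M) := by
  have hBmu : ∀ i j, Amu i j ∈ Set.Icc (0 : ℝ) 1 := fun i j => by
    obtain ⟨h1, h2, h3⟩ := hA i j; exact ⟨h1, by linarith⟩
  have hBnu : ∀ i j, Anu i j ∈ Set.Icc (0 : ℝ) 1 := fun i j => by
    obtain ⟨h1, h2, h3⟩ := hA i j; exact ⟨h2, by linarith⟩
  constructor
  · have hc : CauchySeq (fun m => Useq n lam p Amu m i j) := by
      refine cauchySeq_of_le_geometric lam 1 hlam.2 fun m => ?_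
      rw [Real.dist_eq, abs_sub_comm, one_mul]
      exact Useq_dist hn hBmu hlam hp m i j
    obtain ⟨L, hL⟩ := cauchySeq_tendsto_of_complete hc
    refine ⟨L ^ (1 / p), ?_⟩
    rw [← tendsto_add_atTop_iff_nat 1]
    exact (hL.rpow_const (Or.inr (by positivity))).congr
      fun m => (gmPow_fst_eq hn hBmu hlam hp m i j).symm
  · have hc : CauchySeq (fun m => Vseq n lam p Anu m i j) := by
      refine cauchySeq_of_le_geometric lam 1 hlam.2 fun m => ?_
      rw [Real.dist_eq, abs_sub_comm, one_mul]
      exact Vseq_dist hn hBnu hlam hp m i j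
    obtain ⟨M, hM⟩ := cauchySeq_tendsto_of_complete hc
    refine ⟨M ^ (1 / p), ?_⟩
    rw [← tendsto_add_atTop_iff_nat 1]
    exact (hM.rpow_const (Or.inr (by positivity))).congr
      fun m => (gmPow_snd_eq hn hBnu hlam hp m i j).symm
end

section
/- Let n ≥ 1, let A be an IFM of order n, let λ ∈ [0,1) and let p > 0 be a real number. If r, s, j are indices and Lr, Ls, Mr, Ms are reals with (A^m)μ r j → Lr, (A^m)μ s j → Ls, (A^m)ν r j → Mr, (A^m)ν s j → Ms as m → ∞ (powers taken with the maxgeneralized mean–mingeneralized mean operation), then Lr = Ls and Mr = Ms; that is, in the limit matrix all entries of each column are identical. -/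
open Filter Topology

section Aux

variable {n : ℕ} [Nonempty (Fin n)]

lemma aux_ciSup_sub_le (a b : Fin n → ℝ) (D : ℝ) (h : ∀ t, |a t - b t| ≤ D) :
    |(⨆ t, a t) - ⨆ t, b t| ≤ D := by
  obtain ⟨ta, hta⟩ := Finite.exists_max a
  obtain ⟨tb, htb⟩ := Finite.exists_max b
  have hsa : (⨆ t, a t) = a ta := le_antisymm (ciSup_le hta)
    (le_ciSup (Finite.bddAbove_range a) ta)
  have hsb : (⨆ t, b t) = b tb := le_antisymm (ciSup_le htb)
    (le_ciSup (Finite.bddAbove_range b) tb)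
  rw [hsa, hsb, abs_sub_le_iff]
  have h1 := abs_le.1 (h ta)
  have h2 := abs_le.1 (h tb)
  have := hta tb
  have := htb ta
  constructor <;> linarith

lemma aux_ciInf_sub_le (a b : Fin n → ℝ) (D : ℝ) (h : ∀ t, |a t - b t| ≤ D) :
    |(⨅ t, a t) - ⨅ t, b t| ≤ D := by
  obtain ⟨ta, hta⟩ := Finite.exists_min a
  obtain ⟨tb, htb⟩ := Finite.exists_min b
  have hsa : (⨅ t, a t) = a ta := le_antisymm (ciInf_le (Finite.bddBelow_range a) ta)
    (le_ciInf hta)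
  have hsb : (⨅ t, b t) = b tb := le_antisymm (ciInf_le (Finite.bddBelow_range b) tb)
    (le_ciInf htb)
  rw [hsa, hsb, abs_sub_le_iff]
  have h1 := abs_le.1 (h ta)
  have h2 := abs_le.1 (h tb)
  have := hta tb
  have := htb ta
  constructor <;> linarith

lemma aux_sup_rpow (a : Fin n → ℝ) (ha : ∀ t, 0 ≤ a t) {p : ℝ} (hp : 0 < p) :
    (⨆ t, (a t) ^ (1 / p)) ^ p = ⨆ t, a t := by
  obtain ⟨t0, ht0⟩ := Finite.exists_max a
  have h1 : (⨆ t, (a t) ^ (1 / p)) = (a t0) ^ (1 / p) := by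
    refine le_antisymm (ciSup_le fun t => Real.rpow_le_rpow (ha t) (ht0 t) (by positivity))
      (le_ciSup (Finite.bddAbove_range fun t => a t ^ (1 / p)) t0)
  have h2 : (⨆ t, a t) = a t0 :=
    le_antisymm (ciSup_le ht0) (le_ciSup (Finite.bddAbove_range _) t0)
  rw [h1, h2, one_div, Real.rpow_inv_rpow (ha t0) hp.ne']

lemma aux_inf_rpow (a : Fin n → ℝ) (ha : ∀ t, 0 ≤ a t) {p : ℝ} (hp : 0 < p) :
    (⨅ t, (a t) ^ (1 / p)) ^ p = ⨅ t, a t := by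
  obtain ⟨t0, ht0⟩ := Finite.exists_min a
  have h1 : (⨅ t, (a t) ^ (1 / p)) = (a t0) ^ (1 / p) := by
    refine le_antisymm (ciInf_le (Finite.bddBelow_range _) t0)
      (le_ciInf fun t => Real.rpow_le_rpow (ha t0) (ht0 t) (by positivity))
  have h2 : (⨅ t, a t) = a t0 :=
    le_antisymm (ciInf_le (Finite.bddBelow_range _) t0) (le_ciInf ht0)
  rw [h1, h2, one_div, Real.rpow_inv_rpow (ha t0) hp.ne']

/-- nonnegativity of all entries of all powers -/
lemma gmPow_nonneg (lam p : ℝ) (Amu Anu : Fin n → Fin n → ℝ) (hA : IsIFM n Amu Anu)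
    (hl0 : 0 ≤ lam) (hl1 : lam < 1) (m : ℕ) (i j : Fin n) :
    0 ≤ (gmPow n lam p Amu Anu m).1 i j ∧ 0 ≤ (gmPow n lam p Amu Anu m).2 i j := by
  induction m using Nat.twoStepInduction generalizing i j with
  | zero => exact ⟨(hA i j).1, (hA i j).2.1⟩
  | one => exact ⟨(hA i j).1, (hA i j).2.1⟩
  | more m _ ih =>
    constructor
    · show 0 ≤ ⨆ t : Fin n, (lam * ((gmPow n lam p Amu Anu (m+1)).1 i t) ^ p
          + (1 - lam) * Amu t j ^ p) ^ (1 / p)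
      have h0 : 0 ≤ (lam * ((gmPow n lam p Amu Anu (m+1)).1 i (Classical.arbitrary (Fin n))) ^ p
          + (1 - lam) * Amu (Classical.arbitrary (Fin n)) j ^ p) ^ (1 / p) := by
        have hx := (ih i (Classical.arbitrary (Fin n))).1
        have hy := (hA (Classical.arbitrary (Fin n)) j).1
        have hin : (0:ℝ) ≤ lam * ((gmPow n lam p Amu Anu (m+1)).1 i (Classical.arbitrary (Fin n))) ^ p
            + (1 - lam) * Amu (Classical.arbitrary (Fin n)) j ^ p :=
          add_nonneg (mul_nonneg hl0 (Real.rpow_nonneg hx p))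
            (mul_nonneg (by linarith) (Real.rpow_nonneg hy p))
        exact Real.rpow_nonneg hin _
      refine h0.trans ?_
      exact le_ciSup (Finite.bddAbove_range fun t => (lam * ((gmPow n lam p Amu Anu (m+1)).1 i t) ^ p
          + (1 - lam) * Amu t j ^ p) ^ (1 / p)) (Classical.arbitrary (Fin n))
    · show 0 ≤ ⨅ t : Fin n, (lam * ((gmPow n lam p Amu Anu (m+1)).2 i t) ^ p
          + (1 - lam) * Anu t j ^ p) ^ (1 / p)
      refine le_ciInf fun t => ?_
      have hx := (ih i t).2
      have hy := (hA t j).2.1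
      have hin : (0:ℝ) ≤ lam * ((gmPow n lam p Amu Anu (m+1)).2 i t) ^ p
          + (1 - lam) * Anu t j ^ p :=
        add_nonneg (mul_nonneg hl0 (Real.rpow_nonneg hx p))
          (mul_nonneg (by linarith) (Real.rpow_nonneg hy p))
      exact Real.rpow_nonneg hin _

lemma gmPow_rec_mu (lam p : ℝ) (Amu Anu : Fin n → Fin n → ℝ) (hA : IsIFM n Amu Anu)
    (hl0 : 0 ≤ lam) (hl1 : lam < 1) (hp : 0 < p) (m : ℕ) (i j : Fin n) :
    ((gmPow n lam p Amu Anu (m+2)).1 i j) ^ p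
      = ⨆ t, (lam * ((gmPow n lam p Amu Anu (m+1)).1 i t) ^ p + (1 - lam) * Amu t j ^ p) := by
  show (⨆ t : Fin n, (lam * ((gmPow n lam p Amu Anu (m+1)).1 i t) ^ p
      + (1 - lam) * Amu t j ^ p) ^ (1 / p)) ^ p = _
  refine aux_sup_rpow _ (fun t => ?_) hp
  have h1 := (gmPow_nonneg lam p Amu Anu hA hl0 hl1 (m+1) i t).1
  have h2 := (hA t j).1
  exact add_nonneg (mul_nonneg hl0 (Real.rpow_nonneg h1 p))
    (mul_nonneg (by linarith) (Real.rpow_nonneg h2 p))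

lemma gmPow_rec_nu (lam p : ℝ) (Amu Anu : Fin n → Fin n → ℝ) (hA : IsIFM n Amu Anu)
    (hl0 : 0 ≤ lam) (hl1 : lam < 1) (hp : 0 < p) (m : ℕ) (i j : Fin n) :
    ((gmPow n lam p Amu Anu (m+2)).2 i j) ^ p
      = ⨅ t, (lam * ((gmPow n lam p Amu Anu (m+1)).2 i t) ^ p + (1 - lam) * Anu t j ^ p) := by
  show (⨅ t : Fin n, (lam * ((gmPow n lam p Amu Anu (m+1)).2 i t) ^ p
      + (1 - lam) * Anu t j ^ p) ^ (1 / p)) ^ p = _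
  refine aux_inf_rpow _ (fun t => ?_) hp
  have h1 := (gmPow_nonneg lam p Amu Anu hA hl0 hl1 (m+1) i t).2
  have h2 := (hA t j).2.1
  exact add_nonneg (mul_nonneg hl0 (Real.rpow_nonneg h1 p))
    (mul_nonneg (by linarith) (Real.rpow_nonneg h2 p))

/-- generic contraction-to-zero lemma -/
lemma aux_key (G : ℕ → Fin n → Fin n → ℝ) (r s : Fin n) (lam : ℝ)
    (hl0 : 0 ≤ lam) (hl1 : lam < 1)
    (hstep : ∀ k (j' : Fin n),
      |G (k+2) r j' - G (k+2) s j'| ≤ lam * ⨆ t, |G (k+1) r t - G (k+1) s t|)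
    (j : Fin n) : Tendsto (fun m => G m r j - G m s j) atTop (𝓝 0) := by
  set E : ℕ → ℝ := fun k => ⨆ t, |G k r t - G k s t| with hE
  have hEle : ∀ k t, |G k r t - G k s t| ≤ E k := fun k t =>
    le_ciSup (Finite.bddAbove_range fun t => |G k r t - G k s t|) t
  have hE0 : ∀ k, 0 ≤ E k := fun k => (abs_nonneg _).trans (hEle k (Classical.arbitrary _))
  have hcontr : ∀ k, E (k+2) ≤ lam * E (k+1) := fun k => ciSup_le fun t => hstep k t
  have hbound : ∀ k, E (k+1) ≤ lam ^ k * E 1 := by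
    intro k
    induction k with
    | zero => simp
    | succ k ih =>
      calc E (k+2) ≤ lam * E (k+1) := hcontr k
        _ ≤ lam * (lam ^ k * E 1) := by
            exact mul_le_mul_of_nonneg_left ih hl0
        _ = lam ^ (k+1) * E 1 := by ring
  have habs : Tendsto (fun k => |G (k+1) r j - G (k+1) s j|) atTop (𝓝 0) := by
    refine squeeze_zero (fun k => abs_nonneg _) (fun k => (hEle (k+1) j).trans (hbound k)) ?_
    have := (tendsto_pow_atTop_nhds_zero_of_lt_one hl0 hl1).mul_const (E 1)
    simpa using this
  have habs' : Tendsto (fun k => |G k r j - G k s j|) atTop (𝓝 0) :=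
    (Filter.tendsto_add_atTop_iff_nat 1).mp habs
  exact tendsto_zero_iff_abs_tendsto_zero _ |>.mpr habs'

end Aux

/-- Theorem 3.2 (second part): in the limit of the maxgeneralized
mean–mingeneralized mean powers, all entries of each column coincide. -/
theorem gmPow_limit_columns_identical (n : ℕ) (hn : 1 ≤ n)
    (Amu Anu : Fin n → Fin n → ℝ) (hA : IsIFM n Amu Anu)
    (lam p : ℝ) (hlam : lam ∈ Set.Ico (0 : ℝ) 1) (hp : 0 < p)
    (r s j : Fin n) (Lr Ls Mr Ms : ℝ)
    (hLr : Tendsto (fun m => (gmPow n lam p Amu Anu m).1 r j) atTop (𝓝 Lr))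
    (hLs : Tendsto (fun m => (gmPow n lam p Amu Anu m).1 s j) atTop (𝓝 Ls))
    (hMr : Tendsto (fun m => (gmPow n lam p Amu Anu m).2 r j) atTop (𝓝 Mr))
    (hMs : Tendsto (fun m => (gmPow n lam p Amu Anu m).2 s j) atTop (𝓝 Ms)) :
    Lr = Ls ∧ Mr = Ms := by
  have : Nonempty (Fin n) := ⟨⟨0, hn⟩⟩
  obtain ⟨hl0, hl1⟩ := hlam
  have hnn := gmPow_nonneg (n := n) lam p Amu Anu hA hl0 hl1
  -- p-th power versions
  set G1 : ℕ → Fin n → Fin n → ℝ := fun m i t => ((gmPow n lam p Amu Anu m).1 i t) ^ p with hG1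
  set G2 : ℕ → Fin n → Fin n → ℝ := fun m i t => ((gmPow n lam p Amu Anu m).2 i t) ^ p with hG2
  have hstep1 : ∀ k (j' : Fin n),
      |G1 (k+2) r j' - G1 (k+2) s j'| ≤ lam * ⨆ t, |G1 (k+1) r t - G1 (k+1) s t| := by
    intro k j'
    rw [hG1]
    simp only
    rw [gmPow_rec_mu lam p Amu Anu hA hl0 hl1 hp k r j',
        gmPow_rec_mu lam p Amu Anu hA hl0 hl1 hp k s j']
    refine aux_ciSup_sub_le _ _ _ fun t => ?_
    have h1 : (lam * ((gmPow n lam p Amu Anu (k+1)).1 r t) ^ p + (1 - lam) * Amu t j' ^ p)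
        - (lam * ((gmPow n lam p Amu Anu (k+1)).1 s t) ^ p + (1 - lam) * Amu t j' ^ p)
        = lam * (G1 (k+1) r t - G1 (k+1) s t) := by rw [hG1]; ring
    rw [h1, abs_mul, abs_of_nonneg hl0]
    exact mul_le_mul_of_nonneg_left
      (le_ciSup (Finite.bddAbove_range fun t => |G1 (k+1) r t - G1 (k+1) s t|) t) hl0
  have hstep2 : ∀ k (j' : Fin n),
      |G2 (k+2) r j' - G2 (k+2) s j'| ≤ lam * ⨆ t, |G2 (k+1) r t - G2 (k+1) s t| := by
    intro k j'
    rw [hG2]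
    simp only
    rw [gmPow_rec_nu lam p Amu Anu hA hl0 hl1 hp k r j',
        gmPow_rec_nu lam p Amu Anu hA hl0 hl1 hp k s j']
    refine aux_ciInf_sub_le _ _ _ fun t => ?_
    have h1 : (lam * ((gmPow n lam p Amu Anu (k+1)).2 r t) ^ p + (1 - lam) * Anu t j' ^ p)
        - (lam * ((gmPow n lam p Amu Anu (k+1)).2 s t) ^ p + (1 - lam) * Anu t j' ^ p)
        = lam * (G2 (k+1) r t - G2 (k+1) s t) := by rw [hG2]; ring
    rw [h1, abs_mul, abs_of_nonneg hl0]
    exact mul_le_mul_of_nonneg_left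
      (le_ciSup (Finite.bddAbove_range fun t => |G2 (k+1) r t - G2 (k+1) s t|) t) hl0
  have hz1 := aux_key G1 r s lam hl0 hl1 hstep1 j
  have hz2 := aux_key G2 r s lam hl0 hl1 hstep2 j
  -- limits of p-th powers
  have hcont : ∀ x : ℝ, ContinuousAt (fun y : ℝ => y ^ p) x := fun x =>
    Real.continuousAt_rpow_const x p (Or.inr hp.le)
  have hGLr : Tendsto (fun m => G1 m r j) atTop (𝓝 (Lr ^ p)) := (hcont Lr).tendsto.comp hLr
  have hGLs : Tendsto (fun m => G1 m s j) atTop (𝓝 (Ls ^ p)) := (hcont Ls).tendsto.comp hLs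
  have hGMr : Tendsto (fun m => G2 m r j) atTop (𝓝 (Mr ^ p)) := (hcont Mr).tendsto.comp hMr
  have hGMs : Tendsto (fun m => G2 m s j) atTop (𝓝 (Ms ^ p)) := (hcont Ms).tendsto.comp hMs
  have hpow1 : Lr ^ p = Ls ^ p := by
    have := tendsto_nhds_unique (hGLr.sub hGLs) hz1
    linarith
  have hpow2 : Mr ^ p = Ms ^ p := by
    have := tendsto_nhds_unique (hGMr.sub hGMs) hz2
    linarith
  -- nonnegativity of limits
  have hLr0 : 0 ≤ Lr := ge_of_tendsto hLr (Filter.Eventually.of_forall fun m => (hnn m r j).1)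
  have hLs0 : 0 ≤ Ls := ge_of_tendsto hLs (Filter.Eventually.of_forall fun m => (hnn m s j).1)
  have hMr0 : 0 ≤ Mr := ge_of_tendsto hMr (Filter.Eventually.of_forall fun m => (hnn m r j).2)
  have hMs0 : 0 ≤ Ms := ge_of_tendsto hMs (Filter.Eventually.of_forall fun m => (hnn m s j).2)
  have inj : ∀ x y : ℝ, 0 ≤ x → 0 ≤ y → x ^ p = y ^ p → x = y := by
    intro x y hx hy hxy
    rcases lt_trichotomy x y with h | h | h
    · exact absurd hxy (Real.rpow_lt_rpow hx h hp).ne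
    · exact h
    · exact absurd hxy.symm (Real.rpow_lt_rpow hy h hp).ne
  exact ⟨inj _ _ hLr0 hLs0 hpow1, inj _ _ hMr0 hMs0 hpow2⟩
end

section
/- Let n ≥ 1, let A be an IFM of order n, let λ ∈ (0,1) and let p > 0 be a real number. If for some index j one has (A^m)μ s j → 1 and (A^m)ν s j → 0 as m → ∞ for every index s (powers taken with the maxgeneralized mean–mingeneralized mean operation), then there is a critical path from a critical vertex to j. -/
open Filter Topology

/-- The edge `(i,j)` is critical: `Aμ i j = 1` and `Aν i j = 0`. -/
def CritEdge (n : ℕ) (Amu Anu : Fin n → Fin n → ℝ) (i j : Fin n) : Prop :=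
  Amu i j = 1 ∧ Anu i j = 0

/-- `v` is a critical vertex: it lies on some critical circuit. -/
def CritVertex (n : ℕ) (Amu Anu : Fin n → Fin n → ℝ) (v : Fin n) : Prop :=
  ∃ h : ℕ, 1 ≤ h ∧ ∃ Q : Fin (h + 1) → Fin n,
    Q 0 = Q (Fin.last h) ∧
    (∀ k : Fin h, CritEdge n Amu Anu (Q k.castSucc) (Q k.succ)) ∧ ∃ k, Q k = v

/-- There is a critical path (of some length `m ≥ 1`) from a critical vertex to `j`. -/
def CritPathTo (n : ℕ) (Amu Anu : Fin n → Fin n → ℝ) (j : Fin n) : Prop :=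
  ∃ m : ℕ, 1 ≤ m ∧ ∃ P : Fin (m + 1) → Fin n,
    CritVertex n Amu Anu (P 0) ∧ P (Fin.last m) = j ∧
    ∀ k : Fin m, CritEdge n Amu Anu (P k.castSucc) (P k.succ)

section AuxLemmas

/-- ℕ-indexed critical path (for the μ part) of length `m` ending at `w`. -/
def NPath (n : ℕ) (Amu : Fin n → Fin n → ℝ) (m : ℕ) (w : Fin n) : Prop :=
  ∃ P : ℕ → Fin n, P m = w ∧ ∀ k < m, Amu (P k) (P (k + 1)) = 1

/-- Monotonicity of the generalized-mean term. -/
lemma gm_term_mono {x y X Y lam p : ℝ} (hlam : lam ∈ Set.Ioo (0:ℝ) 1) (hp : 0 < p)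
    (hx0 : 0 ≤ x) (hxX : x ≤ X) (hy0 : 0 ≤ y) (hyY : y ≤ Y) :
    (lam * x ^ p + (1 - lam) * y ^ p) ^ (1 / p)
      ≤ (lam * X ^ p + (1 - lam) * Y ^ p) ^ (1 / p) := by
  obtain ⟨h0, h1⟩ := hlam
  have h2 : (0:ℝ) ≤ 1 - lam := by linarith
  gcongr

/-- Entries of the μ part of powers lie in `[0,1]`. -/
lemma gmPow_mu_mem (n : ℕ) (hn : 1 ≤ n) (Amu Anu : Fin n → Fin n → ℝ)
    (hA : IsIFM n Amu Anu) (lam p : ℝ) (hlam : lam ∈ Set.Ioo (0:ℝ) 1) (hp : 0 < p) :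
    ∀ m i j, 0 ≤ (gmPow n lam p Amu Anu m).1 i j ∧ (gmPow n lam p Amu Anu m).1 i j ≤ 1 := by
  obtain ⟨hl0, hl1⟩ := hlam
  have hl2 : (0:ℝ) ≤ 1 - lam := by linarith
  have hbase : ∀ i j, 0 ≤ Amu i j ∧ Amu i j ≤ 1 := fun i j => by
    obtain ⟨h1, h2, h3⟩ := hA i j; exact ⟨h1, by linarith⟩
  intro m
  induction m using Nat.twoStepInduction with
  | zero => exact hbase
  | one => exact hbase
  | more m _ih1 ih =>
    intro i j
    haveI : Nonempty (Fin n) := ⟨⟨0, hn⟩⟩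
    have hterm : ∀ t : Fin n,
        0 ≤ (lam * (gmPow n lam p Amu Anu (m+1)).1 i t ^ p + (1 - lam) * Amu t j ^ p) ^ (1/p) ∧
        (lam * (gmPow n lam p Amu Anu (m+1)).1 i t ^ p + (1 - lam) * Amu t j ^ p) ^ (1/p) ≤ 1 := by
      intro t
      obtain ⟨hx0, hx1⟩ := ih i t
      obtain ⟨hy0, hy1⟩ := hbase t j
      have hxp : ((gmPow n lam p Amu Anu (m+1)).1 i t) ^ p ≤ 1 :=
        Real.rpow_le_one hx0 hx1 hp.le
      have hyp : (Amu t j) ^ p ≤ 1 := Real.rpow_le_one hy0 hy1 hp.le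
      have hxp0 : 0 ≤ ((gmPow n lam p Amu Anu (m+1)).1 i t) ^ p := Real.rpow_nonneg hx0 p
      have hyp0 : 0 ≤ (Amu t j) ^ p := Real.rpow_nonneg hy0 p
      constructor
      · apply Real.rpow_nonneg; nlinarith
      · apply Real.rpow_le_one (by nlinarith) (by nlinarith) (by positivity)
    constructor
    · have hb : BddAbove (Set.range fun t : Fin n =>
        (lam * (gmPow n lam p Amu Anu (m+1)).1 i t ^ p + (1 - lam) * Amu t j ^ p) ^ (1/p)) :=
        (Set.finite_range _).bddAbove
      exact le_trans (hterm (Classical.arbitrary (Fin n))).1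
        (le_ciSup hb (Classical.arbitrary (Fin n)))
    · exact ciSup_le fun t => (hterm t).2

/-- The increasing sequence of bounds. -/
noncomputable def Bseq (lam p c : ℝ) : ℕ → ℝ
  | 0 => c
  | r + 1 => max (Bseq lam p c r) (max ((lam + (1 - lam) * c ^ p) ^ (1/p))
      ((lam * (Bseq lam p c r) ^ p + (1 - lam)) ^ (1/p)))

lemma Bseq_mem (lam p c : ℝ) (hlam : lam ∈ Set.Ioo (0:ℝ) 1) (hp : 0 < p)
    (hc0 : 0 ≤ c) (hc1 : c < 1) : ∀ r, 0 ≤ Bseq lam p c r ∧ Bseq lam p c r < 1 := by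
  obtain ⟨hl0, hl1⟩ := hlam
  have hl2 : (0:ℝ) ≤ 1 - lam := by linarith
  have hcp : c ^ p < 1 := Real.rpow_lt_one hc0 hc1 hp
  have hcp0 : 0 ≤ c ^ p := Real.rpow_nonneg hc0 p
  intro r
  induction r with
  | zero => exact ⟨hc0, hc1⟩
  | succ r ih =>
    obtain ⟨h0, h1⟩ := ih
    have hbp : (Bseq lam p c r) ^ p < 1 := Real.rpow_lt_one h0 h1 hp
    have hbp0 : 0 ≤ (Bseq lam p c r) ^ p := Real.rpow_nonneg h0 p
    have e1 : (lam + (1 - lam) * c ^ p) ^ (1/p) < 1 :=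
      Real.rpow_lt_one (by nlinarith) (by nlinarith) (by positivity)
    have e2 : (lam * (Bseq lam p c r) ^ p + (1 - lam)) ^ (1/p) < 1 :=
      Real.rpow_lt_one (by nlinarith) (by nlinarith) (by positivity)
    refine ⟨le_trans h0 (le_max_left _ _), ?_⟩
    simp only [Bseq, max_lt_iff]
    exact ⟨h1, e1, e2⟩

/-- Unfolding of the μ part of a power. -/
lemma gmPow_succ_mu (n : ℕ) (lam p : ℝ) (Amu Anu : Fin n → Fin n → ℝ) (m : ℕ) (hm : 1 ≤ m) :
    (gmPow n lam p Amu Anu (m + 1)).1 = fun i j =>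
      ⨆ t : Fin n, (lam * (gmPow n lam p Amu Anu m).1 i t ^ p
        + (1 - lam) * Amu t j ^ p) ^ (1 / p) := by
  match m, hm with
  | m' + 1, _ => rfl

/-- Key bound: if no critical `r`-path ends at `w`, the `(s,w)` entries of all
powers `m ≥ r` are at most `Bseq lam p c r`. -/
lemma gmPow_bound (n : ℕ) (hn : 1 ≤ n) (Amu Anu : Fin n → Fin n → ℝ)
    (hA : IsIFM n Amu Anu) (lam p : ℝ) (hlam : lam ∈ Set.Ioo (0:ℝ) 1) (hp : 0 < p)
    (c : ℝ) (hc0 : 0 ≤ c) (hc1 : c < 1) (hc : ∀ i j, Amu i j < 1 → Amu i j ≤ c) :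
    ∀ r, 1 ≤ r → ∀ w : Fin n, ¬ NPath n Amu r w → ∀ m, r ≤ m → ∀ s : Fin n,
      (gmPow n lam p Amu Anu m).1 s w ≤ Bseq lam p c r := by
  obtain ⟨hl0, hl1⟩ := hlam
  have hl2 : (0:ℝ) ≤ 1 - lam := by linarith
  haveI : Nonempty (Fin n) := ⟨⟨0, hn⟩⟩
  have hmem := gmPow_mu_mem n hn Amu Anu hA lam p ⟨hl0, hl1⟩ hp
  have hAle : ∀ i j, Amu i j ≤ 1 := fun i j => by
    obtain ⟨h1, h2, h3⟩ := hA i j; linarith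
  have hble := Bseq_mem lam p c ⟨hl0, hl1⟩ hp hc0 hc1
  -- the two "component" bounds are ≤ Bseq (r+1)
  have hcomp1 : ∀ r, (lam + (1 - lam) * c ^ p) ^ (1/p) ≤ Bseq lam p c (r + 1) :=
    fun r => le_trans (le_max_left _ _) (le_max_right _ _)
  have hcomp2 : ∀ r, (lam * (Bseq lam p c r) ^ p + (1 - lam)) ^ (1/p) ≤ Bseq lam p c (r + 1) :=
    fun r => le_trans (le_max_right _ _) (le_max_right _ _)
  intro r hr
  induction r, hr using Nat.le_induction with
  | base =>
    intro w hw m hm s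
    have hAc : ∀ t, Amu t w ≤ c := by
      intro t
      rcases lt_or_ge (Amu t w) 1 with h | h
      · exact hc t w h
      · exfalso; apply hw
        refine ⟨fun k => if k = 0 then t else w, by simp, ?_⟩
        intro k hk
        interval_cases k
        simpa using le_antisymm (hAle t w) h
    match m, hm with
    | 1, _ =>
      calc Amu s w ≤ c := hAc s
        _ ≤ _ := le_max_left _ _
    | m' + 2, _ =>
      rw [gmPow_succ_mu n lam p Amu Anu (m' + 1) (by omega)]
      apply ciSup_le
      intro t
      calc (lam * (gmPow n lam p Amu Anu (m'+1)).1 s t ^ p + (1 - lam) * Amu t w ^ p) ^ (1/p)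
          ≤ (lam * 1 ^ p + (1 - lam) * c ^ p) ^ (1/p) :=
            gm_term_mono ⟨hl0, hl1⟩ hp (hmem (m'+1) s t).1 (hmem (m'+1) s t).2
              (hA t w).1 (hAc t)
        _ = (lam + (1 - lam) * c ^ p) ^ (1/p) := by rw [Real.one_rpow, mul_one]
        _ ≤ _ := hcomp1 0
  | succ r hr1 ih =>
    intro w hw m hm s
    match m, hm with
    | m' + 1, hm =>
      have hm' : r ≤ m' := by omega
      have hm'1 : 1 ≤ m' := le_trans hr1 hm'
      rw [gmPow_succ_mu n lam p Amu Anu m' hm'1]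
      apply ciSup_le
      intro t
      by_cases ht : Amu t w = 1
      · -- no critical r-path ends at t
        have hnt : ¬ NPath n Amu r t := by
          rintro ⟨P, hPr, hPe⟩
          apply hw
          refine ⟨fun k => if k ≤ r then P k else w, by simp, ?_⟩
          intro k hk
          show Amu (if k ≤ r then P k else w) (if k + 1 ≤ r then P (k + 1) else w) = 1
          rcases lt_or_ge k r with h | h
          · rw [if_pos (by omega), if_pos (by omega)]
            exact hPe k h
          · have hkr : k = r := by omega
            subst hkr
            rw [if_pos le_rfl, if_neg (by omega), hPr, ht]
        have hx := ih t hnt m' hm' s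
        calc (lam * (gmPow n lam p Amu Anu m').1 s t ^ p + (1 - lam) * Amu t w ^ p) ^ (1/p)
            ≤ (lam * (Bseq lam p c r) ^ p + (1 - lam) * 1 ^ p) ^ (1/p) :=
              gm_term_mono ⟨hl0, hl1⟩ hp (hmem m' s t).1 hx (hA t w).1 (le_of_eq ht)
          _ = (lam * (Bseq lam p c r) ^ p + (1 - lam)) ^ (1/p) := by
              rw [Real.one_rpow, mul_one]
          _ ≤ _ := hcomp2 r
      · have htc : Amu t w ≤ c := hc t w (lt_of_le_of_ne (hAle t w) ht)
        calc (lam * (gmPow n lam p Amu Anu m').1 s t ^ p + (1 - lam) * Amu t w ^ p) ^ (1/p)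
            ≤ (lam * 1 ^ p + (1 - lam) * c ^ p) ^ (1/p) :=
              gm_term_mono ⟨hl0, hl1⟩ hp (hmem m' s t).1 (hmem m' s t).2 (hA t w).1 htc
          _ = (lam + (1 - lam) * c ^ p) ^ (1/p) := by rw [Real.one_rpow, mul_one]
          _ ≤ _ := hcomp1 r

end AuxLemmas


/-- Theorem 3.3 (necessity): if every entry of column `j` of the limit of the
maxgeneralized mean–mingeneralized mean powers is `⟨1,0⟩`, then there is a
critical path from a critical vertex to `j`. -/
theorem gmPow_column_one_implies_critPath (n : ℕ) (hn : 1 ≤ n)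
    (Amu Anu : Fin n → Fin n → ℝ) (hA : IsIFM n Amu Anu)
    (lam p : ℝ) (hlam : lam ∈ Set.Ioo (0 : ℝ) 1) (hp : 0 < p) (j : Fin n)
    (hcol : ∀ s : Fin n,
      Tendsto (fun m => (gmPow n lam p Amu Anu m).1 s j) atTop (𝓝 1) ∧
      Tendsto (fun m => (gmPow n lam p Amu Anu m).2 s j) atTop (𝓝 0)) :
    CritPathTo n Amu Anu j := by
  classical
  obtain ⟨hl0, hl1⟩ := hlam
  haveI : Nonempty (Fin n) := ⟨⟨0, hn⟩⟩
  obtain ⟨c, hc0, hc1, hc⟩ : ∃ c : ℝ, 0 ≤ c ∧ c < 1 ∧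
      ∀ i j', Amu i j' < 1 → Amu i j' ≤ c := by
    refine ⟨Finset.univ.sup' Finset.univ_nonempty
      (fun ij : Fin n × Fin n => if Amu ij.1 ij.2 < 1 then Amu ij.1 ij.2 else 0), ?_, ?_, ?_⟩
    · refine le_trans ?_ (Finset.le_sup'
        (f := fun ij : Fin n × Fin n => if Amu ij.1 ij.2 < 1 then Amu ij.1 ij.2 else 0)
        (Finset.mem_univ (Classical.arbitrary _)))
      split
      · exact (hA _ _).1
      · exact le_rfl
    · rw [Finset.sup'_lt_iff]
      intro ij _
      split
      · assumption
      · norm_num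
    · intro i j' h
      have := Finset.le_sup'
        (f := fun ij : Fin n × Fin n => if Amu ij.1 ij.2 < 1 then Amu ij.1 ij.2 else 0)
        (Finset.mem_univ (i, j'))
      exact le_trans (le_of_eq (if_pos h).symm) this
  have hkey : NPath n Amu n j := by
    by_contra hnp
    have hb := gmPow_bound n hn Amu Anu hA lam p ⟨hl0, hl1⟩ hp c hc0 hc1 hc n hn j hnp
    have h1 : (1:ℝ) ≤ Bseq lam p c n :=
      le_of_tendsto (hcol j).1 (Filter.eventually_atTop.2 ⟨n, fun m hm => hb m hm j⟩)
    have := (Bseq_mem lam p c ⟨hl0, hl1⟩ hp hc0 hc1 n).2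
    linarith
  obtain ⟨P, hPn, hPe⟩ := hkey
  have hcrit : ∀ i j', Amu i j' = 1 → CritEdge n Amu Anu i j' := by
    intro i j' h
    refine ⟨h, ?_⟩
    obtain ⟨h1, h2, h3⟩ := hA i j'
    linarith
  obtain ⟨a, b, hab', hbn, hPab'⟩ : ∃ a b : ℕ, a < b ∧ b ≤ n ∧ P a = P b := by
    obtain ⟨a, b, hab, hPab⟩ := Fintype.exists_ne_map_eq_of_card_lt
      (fun i : Fin (n+1) => P i.val) (by simpa using Nat.lt_succ_self n)
    rcases lt_or_gt_of_ne hab with h | h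
    · exact ⟨a.val, b.val, h, b.is_le, hPab⟩
    · exact ⟨b.val, a.val, h, a.is_le, hPab.symm⟩
  have hcv : CritVertex n Amu Anu (P a) := by
    refine ⟨b - a, by omega, fun i : Fin (b - a + 1) => P (a + i.val), ?_, ?_, ⟨0, by simp⟩⟩
    · show P (a + ((0 : Fin (b - a + 1)) : ℕ)) = P (a + (Fin.last (b - a) : ℕ))
      rw [Fin.val_last]
      simp only [Fin.val_zero, Nat.add_zero]
      rw [Nat.add_sub_cancel' (le_of_lt hab')]
      exact hPab'
    · intro k
      have hk := k.isLt
      have e : a + (k.val + 1) = (a + k.val) + 1 := by omega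
      show CritEdge n Amu Anu (P (a + (k.castSucc : ℕ))) (P (a + (k.succ : ℕ)))
      rw [Fin.coe_castSucc, Fin.val_succ, e]
      exact hcrit _ _ (hPe (a + k.val) (by omega))
  refine ⟨n - a, by omega, fun i : Fin (n - a + 1) => P (a + i.val), ?_, ?_, ?_⟩
  · show CritVertex n Amu Anu (P (a + ((0 : Fin (n - a + 1)) : ℕ)))
    simp only [Fin.val_zero, Nat.add_zero]
    exact hcv
  · show P (a + (Fin.last (n - a) : ℕ)) = j
    rw [Fin.val_last, Nat.add_sub_cancel' (by omega : a ≤ n)]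
    exact hPn
  · intro k
    have hk := k.isLt
    have e : a + (k.val + 1) = (a + k.val) + 1 := by omega
    show CritEdge n Amu Anu (P (a + (k.castSucc : ℕ))) (P (a + (k.succ : ℕ)))
    rw [Fin.coe_castSucc, Fin.val_succ, e]
    exact hcrit _ _ (hPe (a + k.val) (by omega))
end

section
/- Let n ≥ 1, let A be an IFM of order n, let λ ∈ (0,1) and let p > 0 be a real number. Then (A^m)μ i j → 1 and (A^m)ν i j → 0 as m → ∞ for all i, j (powers taken with the maxgeneralized mean–mingeneralized mean operation; i.e., the powers converge to the universal IFM U, all of whose entries are ⟨1,0⟩) if and only if every column of A contains the entry ⟨1,0⟩, i.e., for every j there exists i with Aμ i j = 1 and Aν i j = 0. -/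
open Filter Topology

lemma gmPow_succ_succ (n : ℕ) (lam p : ℝ) (Amu Anu : Fin n → Fin n → ℝ) (m : ℕ) :
    gmPow n lam p Amu Anu (m + 2) =
    (fun i j => ⨆ t : Fin n,
        (lam * (gmPow n lam p Amu Anu (m+1)).1 i t ^ p + (1 - lam) * Amu t j ^ p) ^ (1 / p),
     fun i j => ⨅ t : Fin n,
        (lam * (gmPow n lam p Amu Anu (m+1)).2 i t ^ p + (1 - lam) * Anu t j ^ p) ^ (1 / p)) := rfl

/-- Theorem 3.4: the maxgeneralized mean–mingeneralized mean powers of `A`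
converge to the universal IFM `U` (all entries `⟨1,0⟩`) if and only if every
column of `A` contains the entry `⟨1,0⟩`. -/
theorem gmPow_tendsto_universal_iff (n : ℕ) (hn : 1 ≤ n)
    (Amu Anu : Fin n → Fin n → ℝ) (hA : IsIFM n Amu Anu)
    (lam p : ℝ) (hlam : lam ∈ Set.Ioo (0 : ℝ) 1) (hp : 0 < p) :
    (∀ i j : Fin n,
        Tendsto (fun m => (gmPow n lam p Amu Anu m).1 i j) atTop (𝓝 1) ∧
        Tendsto (fun m => (gmPow n lam p Amu Anu m).2 i j) atTop (𝓝 0)) ↔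
      ∀ j : Fin n, ∃ i : Fin n, Amu i j = 1 ∧ Anu i j = 0 := by
  obtain ⟨hl0, hl1⟩ := hlam
  have hp' : p ≠ 0 := ne_of_gt hp
  have hip : (0:ℝ) < 1 / p := by positivity
  have hpinv : ∀ x : ℝ, 0 ≤ x → (x ^ p) ^ (1/p) = x := fun x hx => by
    rw [← Real.rpow_mul hx, mul_one_div_cancel hp', Real.rpow_one]
  have hinvp : ∀ x : ℝ, 0 ≤ x → (x ^ (1/p)) ^ p = x := fun x hx => by
    rw [← Real.rpow_mul hx, one_div_mul_cancel hp', Real.rpow_one]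
  set P := gmPow n lam p Amu Anu with hP
  haveI : Nonempty (Fin n) := ⟨⟨0, hn⟩⟩
  have base : ∀ i j, (0 ≤ Amu i j ∧ Amu i j ≤ 1) ∧ (0 ≤ Anu i j ∧ Anu i j ≤ 1) := by
    intro i j
    obtain ⟨h1, h2, h3⟩ := hA i j
    exact ⟨⟨h1, by linarith⟩, ⟨h2, by linarith⟩⟩
  have hterm : ∀ (x y : ℝ), 0 ≤ x → x ≤ 1 → 0 ≤ y → y ≤ 1 →
      0 ≤ (lam * x ^ p + (1 - lam) * y ^ p) ^ (1/p) ∧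
      (lam * x ^ p + (1 - lam) * y ^ p) ^ (1/p) ≤ 1 := by
    intro x y hx0 hx1 hy0 hy1
    have hxp0 : 0 ≤ x ^ p := Real.rpow_nonneg hx0 p
    have hyp0 : 0 ≤ y ^ p := Real.rpow_nonneg hy0 p
    have hb0 : 0 ≤ lam * x ^ p + (1 - lam) * y ^ p := by nlinarith
    have hxp : x ^ p ≤ 1 := Real.rpow_le_one hx0 hx1 hp.le
    have hyp : y ^ p ≤ 1 := Real.rpow_le_one hy0 hy1 hp.le
    have hb1 : lam * x ^ p + (1 - lam) * y ^ p ≤ 1 := by nlinarith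
    exact ⟨Real.rpow_nonneg hb0 _, Real.rpow_le_one hb0 hb1 hip.le⟩
  have hbdd : ∀ m i j, (0 ≤ (P m).1 i j ∧ (P m).1 i j ≤ 1) ∧
      (0 ≤ (P m).2 i j ∧ (P m).2 i j ≤ 1) := by
    intro m
    induction m with
    | zero => exact base
    | succ k ih =>
      cases k with
      | zero => exact base
      | succ k' =>
        intro i j
        rw [hP, gmPow_succ_succ]
        dsimp only
        constructor
        · constructor
          · exact Real.iSup_nonneg fun t => (hterm _ _ ((ih i t).1.1) ((ih i t).1.2)
              ((base t j).1.1) ((base t j).1.2)).1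
          · exact ciSup_le fun t => (hterm _ _ ((ih i t).1.1) ((ih i t).1.2)
              ((base t j).1.1) ((base t j).1.2)).2
        · constructor
          · exact le_ciInf fun t => (hterm _ _ ((ih i t).2.1) ((ih i t).2.2)
              ((base t j).2.1) ((base t j).2.2)).1
          · exact ciInf_le_of_le (Set.Finite.bddBelow (Set.finite_range _)) (⟨0, hn⟩ : Fin n)
              (hterm _ _ ((ih i ⟨0, hn⟩).2.1) ((ih i ⟨0, hn⟩).2.2)
              ((base ⟨0, hn⟩ j).2.1) ((base ⟨0, hn⟩ j).2.2)).2
  constructor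
  · -- convergence → every column contains ⟨1,0⟩
    intro h j
    by_contra hj
    push_neg at hj
    have hlt : ∀ i, Amu i j < 1 := by
      intro i
      rcases lt_or_eq_of_le (base i j).1.2 with h1 | h1
      · exact h1
      · exfalso
        obtain ⟨_, h2, h3⟩ := hA i j
        exact hj i h1 (le_antisymm (by linarith) h2)
    obtain ⟨i0, hi0⟩ := Finite.exists_max (fun i : Fin n => Amu i j)
    have hc1 : Amu i0 j < 1 := hlt i0
    have hc0 : 0 ≤ Amu i0 j := (base i0 j).1.1
    set B := lam + (1 - lam) * Amu i0 j ^ p with hB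
    have hcp1 : Amu i0 j ^ p < 1 := Real.rpow_lt_one hc0 hc1 hp
    have hcp0 : 0 ≤ Amu i0 j ^ p := Real.rpow_nonneg hc0 p
    have hB0 : 0 ≤ B := by nlinarith
    have hB1 : B < 1 := by nlinarith
    have hK1 : B ^ (1/p) < 1 := Real.rpow_lt_one hB0 hB1 hip
    have hclaim : ∀ m i, (P (m + 2)).1 i j ≤ B ^ (1/p) := by
      intro m i
      rw [hP, gmPow_succ_succ]
      refine ciSup_le fun t => ?_
      have hX1 : (P (m+1)).1 i t ^ p ≤ 1 :=
        Real.rpow_le_one ((hbdd (m+1) i t).1.1) ((hbdd (m+1) i t).1.2) hp.le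
      have hX0 : 0 ≤ (P (m+1)).1 i t ^ p := Real.rpow_nonneg ((hbdd (m+1) i t).1.1) p
      have ht : Amu t j ^ p ≤ Amu i0 j ^ p :=
        Real.rpow_le_rpow ((base t j).1.1) (hi0 t) hp.le
      have hbase : lam * (P (m+1)).1 i t ^ p + (1 - lam) * Amu t j ^ p ≤ B := by
        have h0 : 0 ≤ Amu t j ^ p := Real.rpow_nonneg ((base t j).1.1) p
        nlinarith
      have hbase0 : 0 ≤ lam * (P (m+1)).1 i t ^ p + (1 - lam) * Amu t j ^ p := by
        have h0 : 0 ≤ Amu t j ^ p := Real.rpow_nonneg ((base t j).1.1) p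
        nlinarith
      exact Real.rpow_le_rpow hbase0 hbase hip.le
    have hev : ∀ᶠ m in atTop, B ^ (1/p) < (P m).1 ⟨0, hn⟩ j :=
      (h ⟨0, hn⟩ j).1.eventually (eventually_gt_nhds hK1)
    obtain ⟨m, hm1, hm2⟩ := (hev.and (eventually_ge_atTop 2)).exists
    obtain ⟨m', rfl⟩ := Nat.exists_eq_add_of_le' hm2
    exact absurd (hclaim m' ⟨0, hn⟩) (not_le.mpr hm1)
  · -- every column contains ⟨1,0⟩ → convergence
    intro h i j
    have hmu : ∀ m i j, 1 - lam ^ m ≤ ((P (m+1)).1 i j) ^ p := by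
      intro m
      induction m with
      | zero =>
        intro i j
        simp only [pow_zero, sub_self]
        exact Real.rpow_nonneg ((hbdd 1 i j).1.1) p
      | succ k ih =>
        intro i j
        obtain ⟨i0, hi0, _⟩ := h j
        have hX0 : 0 ≤ (P (k+1)).1 i i0 := (hbdd (k+1) i i0).1.1
        have hbase0 : 0 ≤ lam * (P (k+1)).1 i i0 ^ p + (1 - lam) * Amu i0 j ^ p := by
          have h1 : 0 ≤ (P (k+1)).1 i i0 ^ p := Real.rpow_nonneg hX0 p
          have h2 : 0 ≤ Amu i0 j ^ p := Real.rpow_nonneg ((base i0 j).1.1) p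
          nlinarith
        have hle : (lam * (P (k+1)).1 i i0 ^ p + (1 - lam) * Amu i0 j ^ p) ^ (1/p)
            ≤ (P (k+1+1)).1 i j := by
          rw [hP, gmPow_succ_succ]
          dsimp only
          exact le_ciSup (f := fun t => (lam * (gmPow n lam p Amu Anu (k+1)).1 i t ^ p + (1 - lam) * Amu t j ^ p) ^ (1/p)) (Set.Finite.bddAbove (Set.finite_range _)) i0
        have hle' : lam * (P (k+1)).1 i i0 ^ p + (1 - lam) * Amu i0 j ^ p
            ≤ ((P (k+2)).1 i j) ^ p := by
          have := Real.rpow_le_rpow (Real.rpow_nonneg hbase0 _) hle hp.le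
          rwa [hinvp _ hbase0] at this
        have hih := ih i i0
        have h1p : Amu i0 j ^ p = 1 := by rw [hi0, Real.one_rpow]
        rw [h1p] at hle'
        have : 1 - lam ^ (k+1) ≤ lam * (P (k+1)).1 i i0 ^ p + (1 - lam) * 1 := by
          have : lam * (1 - lam ^ k) ≤ lam * (P (k+1)).1 i i0 ^ p :=
            mul_le_mul_of_nonneg_left hih hl0.le
          ring_nf
          ring_nf at this
          nlinarith
        linarith
    have hnu : ∀ m i j, ((P (m+1)).2 i j) ^ p ≤ lam ^ m := by
      intro m
      induction m with
      | zero =>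
        intro i j
        simp only [pow_zero]
        exact Real.rpow_le_one ((hbdd 1 i j).2.1) ((hbdd 1 i j).2.2) hp.le
      | succ k ih =>
        intro i j
        obtain ⟨i0, _, hi0⟩ := h j
        have hX0 : 0 ≤ (P (k+1)).2 i i0 := (hbdd (k+1) i i0).2.1
        have hbase0 : 0 ≤ lam * (P (k+1)).2 i i0 ^ p + (1 - lam) * Anu i0 j ^ p := by
          have h1 : 0 ≤ (P (k+1)).2 i i0 ^ p := Real.rpow_nonneg hX0 p
          have h2 : 0 ≤ Anu i0 j ^ p := Real.rpow_nonneg ((base i0 j).2.1) p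
          nlinarith
        have hle : (P (k+1+1)).2 i j
            ≤ (lam * (P (k+1)).2 i i0 ^ p + (1 - lam) * Anu i0 j ^ p) ^ (1/p) := by
          rw [hP, gmPow_succ_succ]
          dsimp only
          exact ciInf_le (f := fun t => (lam * (gmPow n lam p Amu Anu (k+1)).2 i t ^ p + (1 - lam) * Anu t j ^ p) ^ (1/p)) (Set.Finite.bddBelow (Set.finite_range _)) i0
        have hle' : ((P (k+2)).2 i j) ^ p
            ≤ lam * (P (k+1)).2 i i0 ^ p + (1 - lam) * Anu i0 j ^ p := by
          have := Real.rpow_le_rpow ((hbdd (k+2) i j).2.1) hle hp.le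
          rwa [hinvp _ hbase0] at this
        have h0p : Anu i0 j ^ p = 0 := by rw [hi0, Real.zero_rpow hp']
        rw [h0p, mul_zero, add_zero] at hle'
        have : lam * (P (k+1)).2 i i0 ^ p ≤ lam * lam ^ k :=
          mul_le_mul_of_nonneg_left (ih i i0) hl0.le
        calc ((P (k+2)).2 i j) ^ p ≤ lam * lam ^ k := le_trans hle' this
          _ = lam ^ (k+1) := (pow_succ' lam k).symm
    have hltends : Tendsto (fun m : ℕ => lam ^ m) atTop (𝓝 0) :=
      tendsto_pow_atTop_nhds_zero_of_lt_one hl0.le hl1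
    constructor
    · -- μ part
      rw [← tendsto_add_atTop_iff_nat 1]
      have hlow : ∀ m : ℕ, (1 - lam ^ m) ^ (1/p) ≤ (P (m+1)).1 i j := by
        intro m
        have hlm : lam ^ m ≤ 1 := pow_le_one₀ hl0.le hl1.le
        have h1 : (0:ℝ) ≤ 1 - lam ^ m := by linarith
        have := Real.rpow_le_rpow h1 (hmu m i j) hip.le
        rwa [hpinv _ ((hbdd (m+1) i j).1.1)] at this
      have hlowt : Tendsto (fun m : ℕ => (1 - lam ^ m) ^ (1/p)) atTop (𝓝 1) := by
        have : Tendsto (fun m : ℕ => 1 - lam ^ m) atTop (𝓝 (1 - 0)) :=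
          tendsto_const_nhds.sub hltends
        rw [sub_zero] at this
        have := this.rpow_const (p := 1/p) (Or.inl one_ne_zero)
        rwa [Real.one_rpow] at this
      exact tendsto_of_tendsto_of_tendsto_of_le_of_le hlowt tendsto_const_nhds
        hlow (fun m => (hbdd (m+1) i j).1.2)
    · -- ν part
      rw [← tendsto_add_atTop_iff_nat 1]
      have hup : ∀ m : ℕ, (P (m+1)).2 i j ≤ (lam ^ m) ^ (1/p) := by
        intro m
        have h0 : 0 ≤ (P (m+1)).2 i j := (hbdd (m+1) i j).2.1
        have := Real.rpow_le_rpow (Real.rpow_nonneg h0 p) (hnu m i j) hip.le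
        rwa [hpinv _ h0] at this
      have hupt : Tendsto (fun m : ℕ => (lam ^ m) ^ (1/p)) atTop (𝓝 0) := by
        have := hltends.rpow_const (p := 1/p) (Or.inr hip.le)
        rwa [Real.zero_rpow (ne_of_gt hip)] at this
      exact tendsto_of_tendsto_of_tendsto_of_le_of_le tendsto_const_nhds hupt
        (fun m => (hbdd (m+1) i j).2.1) hup
end

section
/- Let n ≥ 1, let A be an IFM of order n, let λ ∈ [0,1], and let p, q be real numbers with 0 < p ≤ q. Write A^m_p for the m-th power of A under the maxgeneralized mean–mingeneralized mean operation with exponent p, and A^m_q for the one with exponent q. Then for every m ≥ 1 and all i, j, the membership entries satisfy (A^m_p)μ i j ≤ (A^m_q)μ i j (this is the membership part of the dominance A^m_p ≤ A^m_q of Theorem 3.6). -/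
open Filter Topology

/-- Two-term weighted power mean inequality. -/
lemma powerMean2_le {lam x y p q : ℝ} (hlam0 : 0 ≤ lam) (hlam1 : lam ≤ 1)
    (hx : 0 ≤ x) (hy : 0 ≤ y) (hp : 0 < p) (hpq : p ≤ q) :
    (lam * x ^ p + (1 - lam) * y ^ p) ^ (1 / p) ≤
      (lam * x ^ q + (1 - lam) * y ^ q) ^ (1 / q) := by
  have hq : 0 < q := hp.trans_le hpq
  have hqp1 : (1 : ℝ) ≤ q / p := (one_le_div hp).mpr hpq
  have hS : 0 ≤ lam * x ^ p + (1 - lam) * y ^ p :=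
    add_nonneg (mul_nonneg hlam0 (Real.rpow_nonneg hx _))
      (mul_nonneg (by linarith) (Real.rpow_nonneg hy _))
  have key : (lam * x ^ p + (1 - lam) * y ^ p) ^ (q / p)
      ≤ lam * x ^ q + (1 - lam) * y ^ q := by
    have h := Real.rpow_arith_mean_le_arith_mean_rpow Finset.univ
      ![lam, 1 - lam] ![x ^ p, y ^ p] ?_ ?_ ?_ hqp1
    · have hxp : (x ^ p) ^ (q / p) = x ^ q := by
        rw [← Real.rpow_mul hx]; congr 1; field_simp
      have hyp : (y ^ p) ^ (q / p) = y ^ q := by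
        rw [← Real.rpow_mul hy]; congr 1; field_simp
      simpa [Fin.sum_univ_succ, hxp, hyp] using h
    · intro i _
      fin_cases i <;> simp [hlam0] <;> linarith
    · simp [Fin.sum_univ_succ]
    · intro i _
      fin_cases i <;> simp <;> positivity
  calc (lam * x ^ p + (1 - lam) * y ^ p) ^ (1 / p)
      = ((lam * x ^ p + (1 - lam) * y ^ p) ^ (q / p)) ^ (1 / q) := by
        rw [← Real.rpow_mul hS]
        congr 1; field_simp
    _ ≤ (lam * x ^ q + (1 - lam) * y ^ q) ^ (1 / q) := by
        apply Real.rpow_le_rpow (Real.rpow_nonneg hS _) key (by positivity)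

lemma gmPow_mu_nonneg (n : ℕ) (Amu Anu : Fin n → Fin n → ℝ)
    (hA : ∀ i j, 0 ≤ Amu i j) (lam : ℝ) (hlam : lam ∈ Set.Icc (0 : ℝ) 1)
    (p : ℝ) (hp : 0 < p) :
    ∀ m i j, 0 ≤ (gmPow n lam p Amu Anu m).1 i j := by
  intro m
  induction m with
  | zero => exact hA
  | succ m ih =>
    match m, ih with
    | 0, _ => exact hA
    | k + 1, ih =>
      intro i j
      have hne : Nonempty (Fin n) := ⟨i⟩
      obtain ⟨t⟩ := hne
      set g : Fin n → ℝ := fun t => (lam * (gmPow n lam p Amu Anu (k+1)).1 i t ^ p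
          + (1 - lam) * Amu t j ^ p) ^ (1 / p) with hg
      have h0 : 0 ≤ g t :=
        Real.rpow_nonneg (add_nonneg
          (mul_nonneg hlam.1 (Real.rpow_nonneg (ih i t) _))
          (mul_nonneg (by linarith [hlam.2]) (Real.rpow_nonneg (hA t j) _))) _
      have e : (gmPow n lam p Amu Anu (k+1+1)).1 i j = ⨆ s : Fin n, g s := rfl
      rw [e]
      exact le_trans h0 (le_ciSup (Set.Finite.bddAbove (Set.finite_range g)) t)

/-- Theorem 3.6 (membership part): for `0 < p ≤ q`, the `m`-th power of `A`
with exponent `p` is dominated in membership by the one with exponent `q`. -/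
theorem gmPow_mu_mono_exponent (n : ℕ) (hn : 1 ≤ n)
    (Amu Anu : Fin n → Fin n → ℝ) (hA : IsIFM n Amu Anu)
    (lam : ℝ) (hlam : lam ∈ Set.Icc (0 : ℝ) 1)
    (p q : ℝ) (hp : 0 < p) (hpq : p ≤ q)
    (m : ℕ) (hm : 1 ≤ m) (i j : Fin n) :
    (gmPow n lam p Amu Anu m).1 i j ≤ (gmPow n lam q Amu Anu m).1 i j := by
  clear hm
  have hq : 0 < q := hp.trans_le hpq
  have hAmu : ∀ i j, 0 ≤ Amu i j := fun i j => (hA i j).1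
  induction m generalizing i j with
  | zero => simp [gmPow]
  | succ m ih =>
    match m, ih with
    | 0, _ => simp [gmPow]
    | k + 1, ih =>
      haveI : Nonempty (Fin n) := ⟨⟨0, hn⟩⟩
      set gp : Fin n → ℝ := fun t => (lam * (gmPow n lam p Amu Anu (k+1)).1 i t ^ p
          + (1 - lam) * Amu t j ^ p) ^ (1 / p) with hgp
      set gq : Fin n → ℝ := fun t => (lam * (gmPow n lam q Amu Anu (k+1)).1 i t ^ q
          + (1 - lam) * Amu t j ^ q) ^ (1 / q) with hgq
      have ep : (gmPow n lam p Amu Anu (k+1+1)).1 i j = ⨆ t : Fin n, gp t := rfl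
      have eq' : (gmPow n lam q Amu Anu (k+1+1)).1 i j = ⨆ t : Fin n, gq t := rfl
      show (gmPow n lam p Amu Anu (k+1+1)).1 i j ≤ (gmPow n lam q Amu Anu (k+1+1)).1 i j
      rw [ep, eq']
      apply ciSup_le
      intro t
      refine le_trans ?_ (le_ciSup (Set.Finite.bddAbove (Set.finite_range gq)) t)
      have hXp := gmPow_mu_nonneg n Amu Anu hAmu lam hlam p hp (k+1) i t
      have hXq := gmPow_mu_nonneg n Amu Anu hAmu lam hlam q hq (k+1) i t
      have hmono : gp t
          ≤ (lam * (gmPow n lam q Amu Anu (k+1)).1 i t ^ p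
            + (1 - lam) * Amu t j ^ p) ^ (1 / p) := by
        apply Real.rpow_le_rpow
        · exact add_nonneg (mul_nonneg hlam.1 (Real.rpow_nonneg hXp _))
            (mul_nonneg (by linarith [hlam.2]) (Real.rpow_nonneg (hAmu t j) _))
        · have hle : (gmPow n lam p Amu Anu (k+1)).1 i t ^ p
              ≤ (gmPow n lam q Amu Anu (k+1)).1 i t ^ p :=
            Real.rpow_le_rpow hXp (ih i t) hp.le
          have := hlam.1
          nlinarith
        · positivity
      exact hmono.trans (powerMean2_le hlam.1 hlam.2 hXq (hAmu t j) hp hpq)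
end

section
/- Let n ≥ 1, let A be an IFM of order n, let λ ∈ (0,1), and let p, q be real numbers with 0 < p ≤ q. Write A^m_p and A^m_q for the m-th powers of A under the maxgeneralized mean–mingeneralized mean operation with exponents p and q respectively. Suppose every column of A contains the entry ⟨1,0⟩, i.e., for every j there exists i with Aμ i j = 1 and Aν i j = 0. Then for every m ≥ 1 and all i, j one has (A^m_p)μ i j ≤ (A^m_q)μ i j ≤ 1, and as m → ∞ both (A^m_p)μ i j and (A^m_q)μ i j tend to 1 while (A^m_p)ν i j and (A^m_q)ν i j tend to 0. -/
open Filter Topology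

/-! ### Auxiliary lemmas -/

lemma rpow_one_div_rpow_aux {x p : ℝ} (hx : 0 ≤ x) (hp : p ≠ 0) :
    (x ^ (1 / p)) ^ p = x := by
  rw [← Real.rpow_mul hx, one_div, inv_mul_cancel₀ hp, Real.rpow_one]

lemma rpow_rpow_one_div_aux {x p : ℝ} (hx : 0 ≤ x) (hp : p ≠ 0) :
    (x ^ p) ^ (1 / p) = x := by
  rw [← Real.rpow_mul hx, mul_one_div, div_self hp, Real.rpow_one]

/-- Two-term generalized power mean: monotonicity in the exponent. -/
lemma pm_exp_mono {lam p q a b : ℝ} (hl0 : 0 ≤ lam) (hl1 : lam ≤ 1)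
    (hp : 0 < p) (hpq : p ≤ q) (ha : 0 ≤ a) (hb : 0 ≤ b) :
    (lam * a ^ p + (1 - lam) * b ^ p) ^ (1 / p) ≤
      (lam * a ^ q + (1 - lam) * b ^ q) ^ (1 / q) := by
  have hq : 0 < q := hp.trans_le hpq
  have hr : (1 : ℝ) ≤ q / p := (one_le_div hp).2 hpq
  have hs0 : 0 ≤ lam * a ^ p + (1 - lam) * b ^ p := by
    have := Real.rpow_nonneg ha p; have := Real.rpow_nonneg hb p; nlinarith
  have key : (lam * a ^ p + (1 - lam) * b ^ p) ^ (q / p) ≤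
      lam * a ^ q + (1 - lam) * b ^ q := by
    have h := (convexOn_rpow hr).2 (Set.mem_Ici.2 (Real.rpow_nonneg ha p))
      (Set.mem_Ici.2 (Real.rpow_nonneg hb p)) hl0
      (by linarith : (0:ℝ) ≤ 1 - lam) (by ring)
    simp only [smul_eq_mul] at h
    have hap : (a ^ p) ^ (q / p) = a ^ q := by
      rw [← Real.rpow_mul ha]; congr 1; field_simp
    have hbp : (b ^ p) ^ (q / p) = b ^ q := by
      rw [← Real.rpow_mul hb]; congr 1; field_simp
    rw [hap, hbp] at h; exact h
  calc (lam * a ^ p + (1 - lam) * b ^ p) ^ (1 / p)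
      = ((lam * a ^ p + (1 - lam) * b ^ p) ^ (q / p)) ^ (1 / q) := by
        rw [← Real.rpow_mul hs0]; congr 1; field_simp
    _ ≤ (lam * a ^ q + (1 - lam) * b ^ q) ^ (1 / q) :=
        Real.rpow_le_rpow (Real.rpow_nonneg hs0 _) key (by positivity)

/-- Two-term generalized power mean: monotonicity in the first argument. -/
lemma pm_arg_mono {lam p a a' b : ℝ} (hl0 : 0 ≤ lam) (hl1 : lam ≤ 1)
    (hp : 0 < p) (ha : 0 ≤ a) (haa : a ≤ a') (hb : 0 ≤ b) :
    (lam * a ^ p + (1 - lam) * b ^ p) ^ (1 / p) ≤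
      (lam * a' ^ p + (1 - lam) * b ^ p) ^ (1 / p) := by
  refine Real.rpow_le_rpow ?_ ?_ (by positivity)
  · have := Real.rpow_nonneg ha p; have := Real.rpow_nonneg hb p; nlinarith
  · have := Real.rpow_le_rpow ha haa hp.le
    have := Real.rpow_nonneg hb p
    nlinarith

/-- All entries of all powers lie in `[0,1]`. -/
lemma gmPow_bounds (n : ℕ) (hn : 1 ≤ n) (Amu Anu : Fin n → Fin n → ℝ)
    (hA : IsIFM n Amu Anu) (lam p : ℝ) (hl0 : 0 ≤ lam) (hl1 : lam ≤ 1) (hp : 0 < p) :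
    ∀ m (i j : Fin n),
      (0 ≤ (gmPow n lam p Amu Anu m).1 i j ∧ (gmPow n lam p Amu Anu m).1 i j ≤ 1) ∧
      (0 ≤ (gmPow n lam p Amu Anu m).2 i j ∧ (gmPow n lam p Amu Anu m).2 i j ≤ 1) := by
  haveI hne : Nonempty (Fin n) := Fin.pos_iff_nonempty.mp hn
  intro m
  induction m using Nat.twoStepInduction with
  | zero =>
    intro i j
    obtain ⟨h1, h2, h3⟩ := hA i j
    simp only [gmPow]
    exact ⟨⟨h1, by linarith⟩, ⟨h2, by linarith⟩⟩
  | one =>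
    intro i j
    obtain ⟨h1, h2, h3⟩ := hA i j
    simp only [gmPow]
    exact ⟨⟨h1, by linarith⟩, ⟨h2, by linarith⟩⟩
  | more m ih ih1 =>
    intro i j
    simp only [gmPow]
    set X := gmPow n lam p Amu Anu (m + 1) with hX
    have hterm_nonneg : ∀ t : Fin n,
        (0:ℝ) ≤ (lam * X.1 i t ^ p + (1 - lam) * Amu t j ^ p) ^ (1 / p) := by
      intro t; exact Real.rpow_nonneg (by
        have := Real.rpow_nonneg ((ih1 i t).1.1) p
        have := Real.rpow_nonneg ((hA t j).1) p
        nlinarith) _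
    have hterm_le : ∀ t : Fin n,
        (lam * X.1 i t ^ p + (1 - lam) * Amu t j ^ p) ^ (1 / p) ≤ 1 := by
      intro t
      refine Real.rpow_le_one (by
        have := Real.rpow_nonneg ((ih1 i t).1.1) p
        have := Real.rpow_nonneg ((hA t j).1) p
        nlinarith) ?_ (by positivity)
      have h1 := Real.rpow_le_one (ih1 i t).1.1 (ih1 i t).1.2 hp.le
      have h2 := Real.rpow_le_one (hA t j).1 (by
        obtain ⟨a1, a2, a3⟩ := hA t j; linarith) hp.le
      have := Real.rpow_nonneg ((ih1 i t).1.1) p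
      have := Real.rpow_nonneg ((hA t j).1) p
      nlinarith
    have hterm2_nonneg : ∀ t : Fin n,
        (0:ℝ) ≤ (lam * X.2 i t ^ p + (1 - lam) * Anu t j ^ p) ^ (1 / p) := by
      intro t; exact Real.rpow_nonneg (by
        have := Real.rpow_nonneg ((ih1 i t).2.1) p
        have := Real.rpow_nonneg ((hA t j).2.1) p
        nlinarith) _
    have hterm2_le : ∀ t : Fin n,
        (lam * X.2 i t ^ p + (1 - lam) * Anu t j ^ p) ^ (1 / p) ≤ 1 := by
      intro t
      refine Real.rpow_le_one (by
        have := Real.rpow_nonneg ((ih1 i t).2.1) p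
        have := Real.rpow_nonneg ((hA t j).2.1) p
        nlinarith) ?_ (by positivity)
      have h1 := Real.rpow_le_one (ih1 i t).2.1 (ih1 i t).2.2 hp.le
      have h2 := Real.rpow_le_one (hA t j).2.1 (by
        obtain ⟨a1, a2, a3⟩ := hA t j; linarith) hp.le
      have := Real.rpow_nonneg ((ih1 i t).2.1) p
      have := Real.rpow_nonneg ((hA t j).2.1) p
      nlinarith
    have t0 : Fin n := ⟨0, hn⟩
    refine ⟨⟨?_, ?_⟩, ⟨?_, ?_⟩⟩
    · exact le_trans (hterm_nonneg t0)
        (le_ciSup (f := fun t => (lam * X.1 i t ^ p + (1 - lam) * Amu t j ^ p) ^ (1 / p))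
          (Set.Finite.bddAbove (Set.finite_range _)) t0)
    · exact ciSup_le hterm_le
    · exact le_ciInf hterm2_nonneg
    · exact le_trans
        (ciInf_le (f := fun t => (lam * X.2 i t ^ p + (1 - lam) * Anu t j ^ p) ^ (1 / p))
          (Set.Finite.bddBelow (Set.finite_range _)) t0)
        (hterm2_le t0)

/-- Monotonicity of membership entries of powers in the exponent. -/
lemma gmPow_exp_mono (n : ℕ) (hn : 1 ≤ n) (Amu Anu : Fin n → Fin n → ℝ)
    (hA : IsIFM n Amu Anu) (lam : ℝ) (hl0 : 0 ≤ lam) (hl1 : lam ≤ 1)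
    (p q : ℝ) (hp : 0 < p) (hpq : p ≤ q) :
    ∀ m (i j : Fin n),
      (gmPow n lam p Amu Anu m).1 i j ≤ (gmPow n lam q Amu Anu m).1 i j := by
  haveI hne : Nonempty (Fin n) := Fin.pos_iff_nonempty.mp hn
  intro m
  induction m using Nat.twoStepInduction with
  | zero => intro i j; exact le_refl _
  | one => intro i j; exact le_refl _
  | more m ih ih1 =>
    intro i j
    simp only [gmPow]
    refine ciSup_mono (Set.Finite.bddAbove (Set.finite_range _)) fun t => ?_
    have hXp := (gmPow_bounds n hn Amu Anu hA lam p hl0 hl1 hp (m+1) i t).1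
    have hAt := (hA t j).1
    calc (lam * (gmPow n lam p Amu Anu (m+1)).1 i t ^ p + (1 - lam) * Amu t j ^ p) ^ (1 / p)
        ≤ (lam * (gmPow n lam p Amu Anu (m+1)).1 i t ^ q + (1 - lam) * Amu t j ^ q) ^ (1 / q) :=
          pm_exp_mono hl0 hl1 hp hpq hXp.1 hAt
      _ ≤ (lam * (gmPow n lam q Amu Anu (m+1)).1 i t ^ q + (1 - lam) * Amu t j ^ q) ^ (1 / q) :=
          pm_arg_mono hl0 hl1 (hp.trans_le hpq) hXp.1 (ih1 i t) hAt

/-- Lower bound for the membership entries of powers. -/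
lemma gmPow_mu_lower (n : ℕ) (hn : 1 ≤ n) (Amu Anu : Fin n → Fin n → ℝ)
    (hA : IsIFM n Amu Anu) (lam : ℝ) (hlam : lam ∈ Set.Ioo (0 : ℝ) 1)
    (p : ℝ) (hp : 0 < p)
    (hcol : ∀ j : Fin n, ∃ i : Fin n, Amu i j = 1 ∧ Anu i j = 0) :
    ∀ m (i j : Fin n),
      (1 - lam ^ m) ^ (1 / p) ≤ (gmPow n lam p Amu Anu (m + 1)).1 i j := by
  haveI hne : Nonempty (Fin n) := Fin.pos_iff_nonempty.mp hn
  have hl0 : 0 ≤ lam := hlam.1.le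
  have hl1 : lam ≤ 1 := hlam.2.le
  intro m
  induction m with
  | zero =>
    intro i j
    simp only [pow_zero, sub_self, Real.zero_rpow (one_div_ne_zero hp.ne')]
    exact (hA i j).1
  | succ m ih =>
    intro i j
    obtain ⟨i0, h1, h0⟩ := hcol j
    have hXb := (gmPow_bounds n hn Amu Anu hA lam p hl0 hl1 hp (m+1) i i0).1
    have hlm : (0:ℝ) ≤ 1 - lam ^ m := by
      have := pow_le_one₀ hl0 hl1 (n := m); linarith
    have hXp : 1 - lam ^ m ≤ (gmPow n lam p Amu Anu (m+1)).1 i i0 ^ p := by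
      have h := Real.rpow_le_rpow (Real.rpow_nonneg hlm _) (ih i i0) hp.le
      rwa [rpow_one_div_rpow_aux hlm hp.ne'] at h
    have hbase : 1 - lam ^ (m+1) ≤
        lam * (gmPow n lam p Amu Anu (m+1)).1 i i0 ^ p + (1 - lam) * Amu i0 j ^ p := by
      rw [h1, Real.one_rpow, mul_one]
      have : lam * (1 - lam ^ m) ≤ lam * (gmPow n lam p Amu Anu (m+1)).1 i i0 ^ p :=
        mul_le_mul_of_nonneg_left hXp hl0
      have hpow : lam * (1 - lam ^ m) = lam - lam ^ (m+1) := by ring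
      linarith
    have hstep : (1 - lam ^ (m+1)) ^ (1/p) ≤
        (lam * (gmPow n lam p Amu Anu (m+1)).1 i i0 ^ p
          + (1 - lam) * Amu i0 j ^ p) ^ (1/p) := by
      refine Real.rpow_le_rpow ?_ hbase (by positivity)
      have := pow_le_one₀ hl0 hl1 (n := m+1); linarith
    refine hstep.trans ?_
    exact le_ciSup (f := fun t => (lam * (gmPow n lam p Amu Anu (m+1)).1 i t ^ p
      + (1 - lam) * Amu t j ^ p) ^ (1/p)) (Set.Finite.bddAbove (Set.finite_range _)) i0

/-- Upper bound for the non-membership entries of powers. -/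
lemma gmPow_nu_upper (n : ℕ) (hn : 1 ≤ n) (Amu Anu : Fin n → Fin n → ℝ)
    (hA : IsIFM n Amu Anu) (lam : ℝ) (hlam : lam ∈ Set.Ioo (0 : ℝ) 1)
    (p : ℝ) (hp : 0 < p)
    (hcol : ∀ j : Fin n, ∃ i : Fin n, Amu i j = 1 ∧ Anu i j = 0) :
    ∀ m (i j : Fin n),
      (gmPow n lam p Amu Anu (m + 1)).2 i j ≤ (lam ^ (1 / p)) ^ m := by
  haveI hne : Nonempty (Fin n) := Fin.pos_iff_nonempty.mp hn
  have hl0 : 0 ≤ lam := hlam.1.le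
  have hl1 : lam ≤ 1 := hlam.2.le
  have hr0 : (0:ℝ) ≤ lam ^ (1/p) := Real.rpow_nonneg hl0 _
  intro m
  induction m with
  | zero =>
    intro i j
    obtain ⟨a1, a2, a3⟩ := hA i j
    simpa [gmPow] using (by linarith : Anu i j ≤ 1)
  | succ m ih =>
    intro i j
    obtain ⟨i0, h1, h0⟩ := hcol j
    have hXb := (gmPow_bounds n hn Amu Anu hA lam p hl0 hl1 hp (m+1) i i0).2
    refine le_trans (ciInf_le (f := fun t => (lam * (gmPow n lam p Amu Anu (m+1)).2 i t ^ p
      + (1 - lam) * Anu t j ^ p) ^ (1/p)) (Set.Finite.bddBelow (Set.finite_range _)) i0) ?_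
    rw [h0, Real.zero_rpow hp.ne', mul_zero, add_zero]
    have hxm : (gmPow n lam p Amu Anu (m+1)).2 i i0 ^ p ≤ ((lam ^ (1/p)) ^ m) ^ p :=
      Real.rpow_le_rpow hXb.1 (ih i i0) hp.le
    calc (lam * (gmPow n lam p Amu Anu (m+1)).2 i i0 ^ p) ^ (1/p)
        ≤ (lam * ((lam ^ (1/p)) ^ m) ^ p) ^ (1/p) := by
          refine Real.rpow_le_rpow ?_ (mul_le_mul_of_nonneg_left hxm hl0) (by positivity)
          exact mul_nonneg hl0 (Real.rpow_nonneg hXb.1 _)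
      _ = (lam ^ (1/p)) ^ (m + 1) := by
          rw [Real.mul_rpow hl0 (Real.rpow_nonneg (pow_nonneg hr0 m) p),
            rpow_rpow_one_div_aux (pow_nonneg hr0 m) hp.ne', pow_succ, mul_comm]

/-- Theorem 3.7: if every column of `A` contains the entry `⟨1,0⟩` then, for
`0 < p ≤ q`, the powers satisfy `A^m_p ≤ A^m_q ≤ U` in membership, and both
sequences of powers converge to the universal IFM `U`. -/
theorem gmPow_faster_convergence (n : ℕ) (hn : 1 ≤ n)
    (Amu Anu : Fin n → Fin n → ℝ) (hA : IsIFM n Amu Anu)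
    (lam : ℝ) (hlam : lam ∈ Set.Ioo (0 : ℝ) 1)
    (p q : ℝ) (hp : 0 < p) (hpq : p ≤ q)
    (hcol : ∀ j : Fin n, ∃ i : Fin n, Amu i j = 1 ∧ Anu i j = 0) :
    (∀ m : ℕ, 1 ≤ m → ∀ i j : Fin n,
        (gmPow n lam p Amu Anu m).1 i j ≤ (gmPow n lam q Amu Anu m).1 i j ∧
        (gmPow n lam q Amu Anu m).1 i j ≤ 1) ∧
      ∀ i j : Fin n,
        Tendsto (fun m => (gmPow n lam p Amu Anu m).1 i j) atTop (𝓝 1) ∧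
        Tendsto (fun m => (gmPow n lam q Amu Anu m).1 i j) atTop (𝓝 1) ∧
        Tendsto (fun m => (gmPow n lam p Amu Anu m).2 i j) atTop (𝓝 0) ∧
        Tendsto (fun m => (gmPow n lam q Amu Anu m).2 i j) atTop (𝓝 0) := by
  have hl0 : 0 ≤ lam := hlam.1.le
  have hl1 : lam ≤ 1 := hlam.2.le
  have hq : 0 < q := hp.trans_le hpq
  -- generic convergence facts for any exponent `e > 0`
  have key : ∀ e : ℝ, 0 < e →
      (∀ i j : Fin n,
        Tendsto (fun m => (gmPow n lam e Amu Anu m).1 i j) atTop (𝓝 1) ∧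
        Tendsto (fun m => (gmPow n lam e Amu Anu m).2 i j) atTop (𝓝 0)) := by
    intro e he i j
    constructor
    · -- membership → 1
      have h0 : Tendsto (fun k : ℕ => 1 - lam ^ k) atTop (𝓝 1) := by
        simpa using (tendsto_pow_atTop_nhds_zero_of_lt_one hl0 hlam.2).const_sub 1
      have h1 := h0.rpow_const (p := 1/e) (Or.inl one_ne_zero)
      rw [Real.one_rpow] at h1
      have hlow : Tendsto (fun m : ℕ => (1 - lam ^ (m - 1)) ^ (1/e)) atTop (𝓝 1) :=
        h1.comp (tendsto_sub_atTop_nat 1)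
      refine tendsto_of_tendsto_of_tendsto_of_le_of_le' hlow tendsto_const_nhds ?_ ?_
      · refine eventually_atTop.2 ⟨1, fun m hm => ?_⟩
        obtain ⟨k, rfl⟩ := Nat.exists_eq_succ_of_ne_zero (by omega : m ≠ 0)
        simpa using gmPow_mu_lower n hn Amu Anu hA lam hlam e he hcol k i j
      · refine Eventually.of_forall fun m => ?_
        exact (gmPow_bounds n hn Amu Anu hA lam e hl0 hl1 he m i j).1.2
    · -- non-membership → 0
      have hr0 : (0:ℝ) ≤ lam ^ (1/e) := Real.rpow_nonneg hl0 _
      have hr1 : lam ^ (1/e) < 1 := Real.rpow_lt_one hl0 hlam.2 (by positivity)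
      have hupp : Tendsto (fun m : ℕ => (lam ^ (1/e)) ^ (m - 1)) atTop (𝓝 0) :=
        (tendsto_pow_atTop_nhds_zero_of_lt_one hr0 hr1).comp (tendsto_sub_atTop_nat 1)
      refine tendsto_of_tendsto_of_tendsto_of_le_of_le' tendsto_const_nhds hupp ?_ ?_
      · refine Eventually.of_forall fun m => ?_
        exact (gmPow_bounds n hn Amu Anu hA lam e hl0 hl1 he m i j).2.1
      · refine eventually_atTop.2 ⟨1, fun m hm => ?_⟩
        obtain ⟨k, rfl⟩ := Nat.exists_eq_succ_of_ne_zero (by omega : m ≠ 0)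
        simpa using gmPow_nu_upper n hn Amu Anu hA lam hlam e he hcol k i j
  refine ⟨fun m _ i j => ⟨gmPow_exp_mono n hn Amu Anu hA lam hl0 hl1 p q hp hpq m i j,
      (gmPow_bounds n hn Amu Anu hA lam q hl0 hl1 hq m i j).1.2⟩,
    fun i j => ⟨(key p hp i j).1, (key q hq i j).1, (key p hp i j).2, (key q hq i j).2⟩⟩
end

section
/- Let λ ∈ [0,1) and α = (1+λ)/2. Let a, b, c be IFNs with aμ ≤ bμ and aν ≥ bν (i.e., a ≤ b in the dominance order). Then a∗c ≤ b∗c, and moreover (b∗c)μ − (a∗c)μ ≤ α·(bμ − aμ) and (a∗c)ν − (b∗c)ν ≥ (1−α)·(aν − bν); that is, b∗c − a∗c ≤ ((1+λ)/2)·(b − a) in the sense of intuitionistic fuzzy numbers. -/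
open Filter Topology

/-- Membership scalar operation of the convex combination of max-min and
maxarithmetic mean–minarithmetic mean: `x ⊛ y = λ·min(x,y) + (1-λ)·(x+y)/2`. -/
noncomputable def starMu (lam x y : ℝ) : ℝ :=
  lam * min x y + (1 - lam) * ((x + y) / 2)

/-- Non-membership scalar operation:
`x ⊛' y = λ·max(x,y) + (1-λ)·(x+y)/2`. -/
noncomputable def starNu (lam x y : ℝ) : ℝ :=
  lam * max x y + (1 - lam) * ((x + y) / 2)

/-- Inequality (6): for IFNs `a ≤ b` (dominance order) and any IFN `c`, one has
`a∗c ≤ b∗c` and `b∗c - a∗c ≤ ((1+λ)/2)·(b - a)` in the sense of IFNs, i.e.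
`(b∗c)μ - (a∗c)μ ≤ α·(bμ - aμ)` and `(a∗c)ν - (b∗c)ν ≥ (1-α)·(aν - bν)`. -/
theorem star_sub_star_le (lam : ℝ) (hlam : lam ∈ Set.Ico (0 : ℝ) 1)
    (alpha : ℝ) (halpha : alpha = (1 + lam) / 2)
    (a b c : ℝ × ℝ)
    (ha : 0 ≤ a.1 ∧ 0 ≤ a.2 ∧ a.1 + a.2 ≤ 1)
    (hb : 0 ≤ b.1 ∧ 0 ≤ b.2 ∧ b.1 + b.2 ≤ 1)
    (hc : 0 ≤ c.1 ∧ 0 ≤ c.2 ∧ c.1 + c.2 ≤ 1)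
    (hab : a.1 ≤ b.1 ∧ b.2 ≤ a.2) :
    (starMu lam a.1 c.1 ≤ starMu lam b.1 c.1 ∧
        starNu lam b.2 c.2 ≤ starNu lam a.2 c.2) ∧
      starMu lam b.1 c.1 - starMu lam a.1 c.1 ≤ alpha * (b.1 - a.1) ∧
      starNu lam a.2 c.2 - starNu lam b.2 c.2 ≥ (1 - alpha) * (a.2 - b.2) := by
  obtain ⟨hl0, hl1⟩ := hlam
  obtain ⟨hab1, hab2⟩ := hab
  have h1 : min a.1 c.1 ≤ min b.1 c.1 := min_le_min hab1 le_rfl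
  have h2 : min b.1 c.1 - min a.1 c.1 ≤ b.1 - a.1 := by
    rcases le_total a.1 c.1 with h | h <;> rcases le_total b.1 c.1 with h' | h' <;>
      simp [min_eq_left, min_eq_right, *] <;> linarith
  have h3 : max b.2 c.2 ≤ max a.2 c.2 := max_le_max hab2 le_rfl
  unfold starMu starNu
  refine ⟨⟨?_, ?_⟩, ?_, ?_⟩ <;> subst halpha <;> nlinarith [mul_nonneg hl0 (sub_nonneg.2 h1), mul_nonneg hl0 (sub_nonneg.2 h3)]
end
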